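/- arXiv:2405.20907 — 2 statements merged into one kernel-verified Lean document; each statement's English description precedes it below -/
import Mathlib

section
/- Let X be a quasi-Banach function space over ℝ^d (with Lebesgue measure) and let Q ⊆ ℝ^d be a cube. Then the averaging operator T_Q is bounded from X to X if and only if 1_Q ∈ X and 1_Q ∈ X'; and in that case ‖T_Q‖_{X→X} = |Q|^{-1} ‖1_Q‖_X ‖1_Q‖_{X'}. -/
open MeasureTheory ENNReal Filter

noncomputable section

abbrev FnSp (d : ℕ) := (Fin d → ℝ) → ℝ

/-- A quasi-Banach function space over `ℝ^d`, encoded by a total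
`ℝ≥0∞`-valued quasinorm (with `enorm f = ∞` when `f` is not in the space). -/
structure QBFS (d : ℕ) where
  enorm : FnSp d → ℝ≥0∞
  K : ℝ≥0∞
  one_le_K : 1 ≤ K
  K_lt_top : K < ⊤
  enorm_congr : ∀ f g : FnSp d, f =ᵐ[volume] g → enorm f = enorm g
  enorm_smul : ∀ (c : ℝ) (f : FnSp d), enorm (c • f) = ENNReal.ofReal |c| * enorm f
  enorm_triangle : ∀ f g : FnSp d, enorm (f + g) ≤ K * (enorm f + enorm g)
  enorm_definite : ∀ f : FnSp d, AEMeasurable f volume → enorm f = 0 → f =ᵐ[volume] 0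
  ideal : ∀ f g : FnSp d, AEMeasurable f volume → AEMeasurable g volume →
    (∀ᵐ x ∂volume, |g x| ≤ |f x|) → enorm g ≤ enorm f
  saturation : ∀ E : Set (Fin d → ℝ), MeasurableSet E → 0 < volume E →
    ∃ F : Set (Fin d → ℝ), F ⊆ E ∧ MeasurableSet F ∧ 0 < volume F ∧
      enorm (F.indicator fun _ => (1 : ℝ)) < ⊤
  complete : ∀ f : ℕ → FnSp d,
    (∀ n, AEMeasurable (f n) volume ∧ enorm (f n) < ⊤) →
    (∀ ε : ℝ≥0∞, 0 < ε → ∃ N : ℕ, ∀ m ≥ N, ∀ n ≥ N, enorm (f m - f n) < ε) →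
    ∃ g : FnSp d, AEMeasurable g volume ∧ enorm g < ⊤ ∧
      Tendsto (fun n => enorm (f n - g)) atTop (nhds 0)

/-- Membership in the function space with quasinorm `N`. -/
def MemN {d : ℕ} (N : FnSp d → ℝ≥0∞) (f : FnSp d) : Prop :=
  AEMeasurable f volume ∧ N f < ⊤

def QBFS.Mem {d : ℕ} (X : QBFS d) (f : FnSp d) : Prop := MemN X.enorm f

/-- The Köthe dual norm of the quasinorm `N`. -/
def dualENormN {d : ℕ} (N : FnSp d → ℝ≥0∞) (g : FnSp d) : ℝ≥0∞ :=
  ⨆ f ∈ {f : FnSp d | AEMeasurable f volume ∧ N f = 1},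
    ∫⁻ x, ENNReal.ofReal |f x * g x|

/-- An axis-parallel cube in `ℝ^d`. -/
structure Cube (d : ℕ) where
  corner : Fin d → ℝ
  side : ℝ
  side_pos : 0 < side

/-- The (closed) cube as a subset of `ℝ^d`. -/
def Cube.set {d : ℕ} (Q : Cube d) : Set (Fin d → ℝ) :=
  Set.Icc Q.corner (fun i => Q.corner i + Q.side)

/-- The half-open realization of a cube (used for dyadic grids). -/
def Cube.hset {d : ℕ} (Q : Cube d) : Set (Fin d → ℝ) :=
  {x | ∀ i, Q.corner i ≤ x i ∧ x i < Q.corner i + Q.side}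

/-- The indicator function `1_Q` of a cube. -/
def cubeInd {d : ℕ} (Q : Cube d) : FnSp d := Q.set.indicator fun _ => (1 : ℝ)

/-- The average `⟨f⟩_{1,Q}`, valued in `ℝ≥0∞`. -/
def avg {d : ℕ} (Q : Cube d) (f : FnSp d) : ℝ≥0∞ :=
  (∫⁻ x in Q.set, ENNReal.ofReal |f x|) / volume Q.set

/-- The `L^r`-average `⟨f⟩_{r,Q}`, valued in `ℝ≥0∞`. -/
def avgR {d : ℕ} (r : ℝ) (Q : Cube d) (f : FnSp d) : ℝ≥0∞ :=
  ((∫⁻ x in Q.set, ENNReal.ofReal |f x| ^ r) / volume Q.set) ^ (1 / r)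

/-- The signed average `⟨f⟩_Q`. -/
def savg {d : ℕ} (Q : Cube d) (f : FnSp d) : ℝ :=
  (∫ x in Q.set, f x) / (volume Q.set).toReal

def PairwiseDisjointCubes {d : ℕ} (P : Set (Cube d)) : Prop :=
  P.Pairwise fun Q Q' => Disjoint Q.set Q'.set

/-- An `η`-sparse collection of cubes. -/
def IsSparse {d : ℕ} (η : ℝ) (S : Set (Cube d)) : Prop :=
  ∃ E : Cube d → Set (Fin d → ℝ),
    (∀ Q ∈ S, MeasurableSet (E Q) ∧ E Q ⊆ Q.set ∧
      ENNReal.ofReal η * volume Q.set ≤ volume (E Q)) ∧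
    S.Pairwise fun Q Q' => Disjoint (E Q) (E Q')

/-- `A_𝒫 f = ∑_{Q ∈ 𝒫} ⟨f⟩_{1,Q} 1_Q`, valued in `ℝ≥0∞`. -/
def avgSumE {d : ℕ} (P : Set (Cube d)) (f : FnSp d) : (Fin d → ℝ) → ℝ≥0∞ :=
  fun x => ∑' Q : P, Q.1.set.indicator (fun _ => avg Q.1 f) x

/-- The Hardy–Littlewood maximal function, valued in `ℝ≥0∞`. -/
def maximalE {d : ℕ} (f : FnSp d) : (Fin d → ℝ) → ℝ≥0∞ :=
  fun x => ⨆ (Q : Cube d) (_ : x ∈ Q.set), avg Q f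

def maximalFn {d : ℕ} (f : FnSp d) : FnSp d := fun x => (maximalE f x).toReal

/-- The weak quasinorm `sup_{λ>0} ‖λ 1_{F > λ}‖` of an `ℝ≥0∞`-valued function. -/
def weakENormE {d : ℕ} (N : FnSp d → ℝ≥0∞) (F : (Fin d → ℝ) → ℝ≥0∞) : ℝ≥0∞ :=
  ⨆ l ∈ Set.Ioi (0 : ℝ), N ({x | ENNReal.ofReal l < F x}.indicator fun _ => l)

def weakENorm {d : ℕ} (N : FnSp d → ℝ≥0∞) (g : FnSp d) : ℝ≥0∞ :=
  weakENormE N fun x => ENNReal.ofReal |g x|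

/-- Boundedness of the averaging operator `T_Q` with constant `C`. -/
def TQBound {d : ℕ} (N : FnSp d → ℝ≥0∞) (Q : Cube d) (C : ℝ≥0∞) : Prop :=
  ∀ f : FnSp d, MemN N f → avg Q f ≠ ⊤ ∧
    N (Q.set.indicator fun _ => (avg Q f).toReal) ≤ C * N f

/-- Weak boundedness of the averaging operator `T_Q` with constant `C`. -/
def TQWeakBound {d : ℕ} (N : FnSp d → ℝ≥0∞) (Q : Cube d) (C : ℝ≥0∞) : Prop :=
  ∀ f : FnSp d, MemN N f →
    weakENormE N (Q.set.indicator fun _ => avg Q f) ≤ C * N f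

/-- `X ∈ A_strong` with constant `C`. -/
def StrongBoundN {d : ℕ} (N : FnSp d → ℝ≥0∞) (C : ℝ≥0∞) : Prop :=
  ∀ P : Set (Cube d), PairwiseDisjointCubes P → ∀ f : FnSp d, MemN N f →
    (∀ᵐ x ∂volume, avgSumE P f x ≠ ⊤) ∧
    AEMeasurable (fun x => (avgSumE P f x).toReal) volume ∧
    N (fun x => (avgSumE P f x).toReal) ≤ C * N f

/-- Boundedness of a single sparse operator `A_𝒮` with constant `C`. -/
def SparseBoundOneN {d : ℕ} (N : FnSp d → ℝ≥0∞) (S : Set (Cube d)) (C : ℝ≥0∞) : Prop :=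
  ∀ f : FnSp d, MemN N f →
    (∀ᵐ x ∂volume, avgSumE S f x ≠ ⊤) ∧
    AEMeasurable (fun x => (avgSumE S f x).toReal) volume ∧
    N (fun x => (avgSumE S f x).toReal) ≤ C * N f

/-- `X ∈ A_sparse` with constant `C`. -/
def SparseBoundN {d : ℕ} (N : FnSp d → ℝ≥0∞) (C : ℝ≥0∞) : Prop :=
  ∀ S : Set (Cube d), IsSparse (1 / 2) S → SparseBoundOneN N S C

/-- Weak boundedness of a single sparse operator `A_𝒮` with constant `C`. -/
def SparseWeakBoundOneN {d : ℕ} (N : FnSp d → ℝ≥0∞) (S : Set (Cube d)) (C : ℝ≥0∞) : Prop :=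
  ∀ f : FnSp d, MemN N f → weakENormE N (avgSumE S f) ≤ C * N f

/-- `M : X → X` with constant `C`. -/
def MBoundN {d : ℕ} (N : FnSp d → ℝ≥0∞) (C : ℝ≥0∞) : Prop :=
  ∀ f : FnSp d, MemN N f →
    (∀ᵐ x ∂volume, maximalE f x ≠ ⊤) ∧
    AEMeasurable (maximalFn f) volume ∧
    N (maximalFn f) ≤ C * N f

/-- `M : X → X_weak` with constant `C`. -/
def MWeakBoundN {d : ℕ} (N : FnSp d → ℝ≥0∞) (C : ℝ≥0∞) : Prop :=
  ∀ f : FnSp d, MemN N f → weakENormE N (maximalE f) ≤ C * N f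

/-- The Muckenhoupt constant `[X]_A`. -/
def muckAConstN {d : ℕ} (N : FnSp d → ℝ≥0∞) : ℝ≥0∞ :=
  ⨆ Q : Cube d, N (cubeInd Q) * dualENormN N (cubeInd Q) / volume Q.set

/-- The Muckenhoupt condition `X ∈ A`. -/
def MuckAN {d : ℕ} (N : FnSp d → ℝ≥0∞) : Prop :=
  (∀ Q : Cube d, N (cubeInd Q) < ⊤ ∧ dualENormN N (cubeInd Q) < ⊤) ∧
    muckAConstN N < ⊤

/-- The Fatou property. -/
def HasFatou {d : ℕ} (X : QBFS d) : Prop :=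
  ∀ (f : ℕ → FnSp d) (g : FnSp d),
    (∀ n, AEMeasurable (f n) volume) → AEMeasurable g volume →
    (∀ n, ∀ᵐ x ∂volume, 0 ≤ f n x ∧ f n x ≤ f (n + 1) x) →
    (∀ᵐ x ∂volume, Tendsto (fun n => f n x) atTop (nhds (g x))) →
    (⨆ n, X.enorm (f n)) < ⊤ →
    X.enorm g = ⨆ n, X.enorm (f n)

/-- Order-continuity. -/
def OrderCont {d : ℕ} (X : QBFS d) : Prop :=
  ∀ f : ℕ → FnSp d, (∀ n, X.Mem (f n)) →
    (∀ n, ∀ᵐ x ∂volume, 0 ≤ f (n + 1) x ∧ f (n + 1) x ≤ f n x) →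
    (∀ᵐ x ∂volume, Tendsto (fun n => f n x) atTop (nhds 0)) →
    Tendsto (fun n => X.enorm (f n)) atTop (nhds 0)

/-- `X` is a Banach function space: the quasinorm is a norm. -/
def IsBanachFS {d : ℕ} (X : QBFS d) : Prop :=
  ∀ f g : FnSp d, X.enorm (f + g) ≤ X.enorm f + X.enorm g

/-- The `r`-concavification `X^r` of a quasinorm. -/
def concN {d : ℕ} (N : FnSp d → ℝ≥0∞) (r : ℝ) : FnSp d → ℝ≥0∞ :=
  fun f => N (fun x => |f x| ^ (1 / r)) ^ r

/-- Non-degeneracy of an operator `T` with constant `C`. -/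
def NonDeg {d : ℕ} (T : FnSp d → FnSp d) (C : ℝ) : Prop :=
  ∀ l : ℝ, 0 < l → ∃ xl : Fin d → ℝ, ∀ Q : Cube d, Q.side = l →
    ∀ f : FnSp d, (∀ x, 0 ≤ f x) → (∀ x, x ∉ Q.set → f x = 0) →
      IntegrableOn f Q.set volume →
      ∀ x : Fin d → ℝ,
        (x ∈ (fun y => y + xl) '' Q.set ∨ x ∈ (fun y => y - xl) '' Q.set) →
        C * ((∫ y in Q.set, f y) / (volume Q.set).toReal) ≤ |T f x|

/-- `p`-convexity of a quasinorm with constant `Mc`. -/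
def PConvexN {d : ℕ} (N : FnSp d → ℝ≥0∞) (p : ℝ) (Mc : ℝ≥0∞) : Prop :=
  ∀ (n : ℕ) (f : Fin n → FnSp d),
    N (fun x => (∑ i, |f i x| ^ p) ^ (1 / p)) ≤ Mc * (∑ i, N (f i) ^ p) ^ (1 / p)

/-- The `A₁` constant of a weight. -/
def A1ConstE {d : ℕ} (w : FnSp d) : ℝ≥0∞ :=
  ⨆ Q : Cube d, avg Q w *
    essSup (Q.set.indicator fun y => (ENNReal.ofReal (w y))⁻¹) volume

/-- The `A_p` constant of a weight (with the `A₁` constant when `p = 1`). -/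
def ApConstE {d : ℕ} (p : ℝ) (w : FnSp d) : ℝ≥0∞ :=
  if p = 1 then A1ConstE w
  else ⨆ Q : Cube d,
    ((∫⁻ x in Q.set, ENNReal.ofReal (w x) ^ p) / volume Q.set) ^ (1 / p) *
      ((∫⁻ x in Q.set, ENNReal.ofReal (w x) ^ (-(p / (p - 1)))) / volume Q.set) ^ (1 - 1 / p)

/-- `A_p`-regularity of the space with quasinorm `N`, with constants `C₁, C₂`. -/
def ApRegularN {d : ℕ} (N : FnSp d → ℝ≥0∞) (p : ℝ) (C₁ C₂ : ℝ≥0∞) : Prop :=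
  ∀ f : FnSp d, MemN N f → ∃ w : FnSp d, Measurable w ∧ (∀ x, 0 < w x) ∧
    (∀ᵐ x ∂volume, |f x| ≤ w x) ∧ N w ≤ C₁ * N f ∧ ApConstE p w ≤ C₂

/-- The quasinorm of the Calderón product `X · Y`. -/
def prodENorm {d : ℕ} (N₁ N₂ : FnSp d → ℝ≥0∞) (f : FnSp d) : ℝ≥0∞ :=
  ⨅ (h : FnSp d) (k : FnSp d) (_ : AEMeasurable h volume) (_ : AEMeasurable k volume)
    (_ : ∀ x, 0 ≤ h x) (_ : ∀ x, 0 ≤ k x)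
    (_ : ∀ᵐ x ∂volume, |f x| ≤ h x * k x), N₁ h * N₂ k

/-- Cubes with rational corners. -/
def IsRatCube {d : ℕ} (Q : Cube d) : Prop :=
  (∀ i, ∃ q : ℚ, Q.corner i = (q : ℝ)) ∧ ∃ q : ℚ, Q.side = (q : ℝ)

def RatCube (d : ℕ) := {Q : Cube d // IsRatCube Q}

/-- The pointwise `ℓ^r`-norm of a family indexed by the rational cubes
(`r = ⊤` gives the `ℓ^∞` norm). -/
def lNormE {d : ℕ} (r : ℝ≥0∞) (F : RatCube d → FnSp d) (x : Fin d → ℝ) : ℝ≥0∞ :=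
  if r = ⊤ then ⨆ Q : RatCube d, ENNReal.ofReal |F Q x|
  else (∑' Q : RatCube d, ENNReal.ofReal |F Q x| ^ r.toReal) ^ (1 / r.toReal)

/-- Membership in the mixed-norm space `X[ℓ^r]`. -/
def MemMixed {d : ℕ} (X : QBFS d) (r : ℝ≥0∞) (F : RatCube d → FnSp d) : Prop :=
  (∀ Q, AEMeasurable (F Q) volume) ∧
  (∀ᵐ x ∂volume, lNormE r F x ≠ ⊤) ∧
  AEMeasurable (fun x => (lNormE r F x).toReal) volume ∧
  X.enorm (fun x => (lNormE r F x).toReal) < ⊤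

/-- The mixed norm `‖F‖_{X[ℓ^r]}`. -/
def mixedENorm {d : ℕ} (X : QBFS d) (r : ℝ≥0∞) (F : RatCube d → FnSp d) : ℝ≥0∞ :=
  X.enorm (fun x => (lNormE r F x).toReal)

/-- The linearized maximal operator `𝓜((f_Q)_Q) = (⟨f_Q⟩_Q 1_Q)_Q`. -/
def mixM {d : ℕ} (F : RatCube d → FnSp d) : RatCube d → FnSp d :=
  fun Q => Q.1.set.indicator fun _ => savg Q.1 (F Q)

/-- Boundedness of `𝓜` on `X[ℓ^r]` with constant `C`. -/
def MixMBound {d : ℕ} (X : QBFS d) (r : ℝ≥0∞) (C : ℝ≥0∞) : Prop :=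
  ∀ F : RatCube d → FnSp d, MemMixed X r F →
    (∀ Q : RatCube d, IntegrableOn (F Q) Q.1.set volume) ∧
    MemMixed X r (mixM F) ∧
    mixedENorm X r (mixM F) ≤ C * mixedENorm X r F

/-- A dyadic grid (of half-open cubes). -/
def IsDyadicGrid {d : ℕ} (D : Set (Cube d)) : Prop :=
  (∀ Q ∈ D, ∃ k : ℤ, Q.side = (2 : ℝ) ^ k) ∧
  (∀ k : ℤ, ∀ x : Fin d → ℝ, ∃! Q : Cube d, Q ∈ D ∧ Q.side = (2 : ℝ) ^ k ∧ x ∈ Q.hset) ∧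
  (∀ Q ∈ D, ∀ Q' ∈ D, Q.hset ⊆ Q'.hset ∨ Q'.hset ⊆ Q.hset ∨ Disjoint Q.hset Q'.hset)

/-- The average over a half-open cube. -/
def avgH {d : ℕ} (Q : Cube d) (f : FnSp d) : ℝ≥0∞ :=
  (∫⁻ x in Q.hset, ENNReal.ofReal |f x|) / volume Q.hset

/-- `A_𝒮 f` for half-open cubes. -/
def avgSumHE {d : ℕ} (S : Set (Cube d)) (f : FnSp d) : (Fin d → ℝ) → ℝ≥0∞ :=
  fun x => ∑' Q : S, Q.1.hset.indicator (fun _ => avgH Q.1 f) x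

/-- `η`-sparseness for half-open cubes. -/
def IsSparseH {d : ℕ} (η : ℝ) (S : Set (Cube d)) : Prop :=
  ∃ E : Cube d → Set (Fin d → ℝ),
    (∀ Q ∈ S, MeasurableSet (E Q) ∧ E Q ⊆ Q.hset ∧
      ENNReal.ofReal η * volume Q.hset ≤ volume (E Q)) ∧
    S.Pairwise fun Q Q' => Disjoint (E Q) (E Q')

/-- The maximal cubes of `E` strictly contained in `Q`. -/
def childrenH {d : ℕ} (E : Set (Cube d)) (Q : Cube d) : Set (Cube d) :=
  {Q' | Q' ∈ E ∧ Q'.hset ⊂ Q.hset ∧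
    ¬∃ Q'' ∈ E, Q'.hset ⊂ Q''.hset ∧ Q''.hset ⊂ Q.hset}

/-- The dyadic maximal operator `M^𝒟`. -/
def maximalHD {d : ℕ} (D : Set (Cube d)) (f : FnSp d) (x : Fin d → ℝ) : ℝ≥0∞ :=
  ⨆ Q ∈ D, Q.hset.indicator (fun _ => avgH Q f) x


section Aux

variable {d : ℕ}

lemma cube_meas (Q : Cube d) : MeasurableSet Q.set := measurableSet_Icc

lemma cube_vol_eq (Q : Cube d) : volume Q.set = ENNReal.ofReal Q.side ^ d := by
  rw [Cube.set, Real.volume_Icc_pi]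
  simp [add_sub_cancel_left]

lemma cube_vol_pos (Q : Cube d) : 0 < volume Q.set := by
  rw [cube_vol_eq]
  exact ENNReal.pow_pos (ENNReal.ofReal_pos.2 Q.side_pos) d

lemma cube_vol_ne_top (Q : Cube d) : volume Q.set ≠ ⊤ := by
  rw [cube_vol_eq]
  exact (ENNReal.pow_lt_top ENNReal.ofReal_lt_top).ne

end Aux
lemma cubeInd_meas (Q : Cube d) : Measurable (cubeInd Q) :=
  (measurable_const.indicator (cube_meas Q))

lemma abs_cubeInd (Q : Cube d) (x : Fin d → ℝ) :
    cubeInd Q x = Q.set.indicator (fun _ => (1:ℝ)) x := rfl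

lemma lint_mul_ind (Q : Cube d) (f : FnSp d) :
    ∫⁻ x, ENNReal.ofReal |f x * cubeInd Q x| = ∫⁻ x in Q.set, ENNReal.ofReal |f x| := by
  rw [← lintegral_indicator (cube_meas Q)]
  refine lintegral_congr fun x => ?_
  by_cases hx : x ∈ Q.set
  · simp [cubeInd, Set.indicator_of_mem hx]
  · simp [cubeInd, Set.indicator_of_notMem hx]

lemma ind_const_eq_smul (Q : Cube d) (r : ℝ) :
    (Q.set.indicator fun _ => r) = r • cubeInd Q := by
  funext x
  by_cases hx : x ∈ Q.set
  · simp [cubeInd, Set.indicator_of_mem hx]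
  · simp [cubeInd, Set.indicator_of_notMem hx]

lemma enorm_ind_const (X : QBFS d) (Q : Cube d) (r : ℝ) :
    X.enorm (Q.set.indicator fun _ => r) = ENNReal.ofReal |r| * X.enorm (cubeInd Q) := by
  rw [ind_const_eq_smul, X.enorm_smul]

lemma qbfs_enorm_zero (X : QBFS d) : X.enorm 0 = 0 := by
  have h := X.enorm_smul 0 0
  simpa using h

lemma enorm_ae_zero (X : QBFS d) {f : FnSp d} (h : f =ᵐ[volume] 0) : X.enorm f = 0 := by
  rw [X.enorm_congr f 0 h, qbfs_enorm_zero]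

lemma cubeInd_enorm_pos (X : QBFS d) (Q : Cube d) : 0 < X.enorm (cubeInd Q) := by
  rcases eq_or_ne (X.enorm (cubeInd Q)) 0 with h | h
  · exfalso
    have hz := X.enorm_definite _ (cubeInd_meas Q).aemeasurable h
    have : volume {x | ¬ cubeInd Q x = (0 : FnSp d) x} = 0 := by
      simpa [Filter.EventuallyEq, ae_iff] using hz
    have hsub : Q.set ⊆ {x | ¬ cubeInd Q x = (0 : FnSp d) x} := by
      intro x hx
      simp [cubeInd, Set.indicator_of_mem hx, hx]
    exact absurd (measure_mono_null hsub this) (cube_vol_pos Q).ne'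
  · exact h.bot_lt
lemma avg_smul (Q : Cube d) (c : ℝ) (f : FnSp d) :
    avg Q (c • f) = ENNReal.ofReal |c| * avg Q f := by
  have h : ∀ x, ENNReal.ofReal |(c • f) x| = ENNReal.ofReal |c| * ENNReal.ofReal |f x| := by
    intro x
    rw [Pi.smul_apply, smul_eq_mul, abs_mul, ENNReal.ofReal_mul (abs_nonneg c)]
  simp only [avg, h]
  rw [lintegral_const_mul' _ _ ENNReal.ofReal_ne_top, mul_div_assoc]

lemma unit_le_dual (N : FnSp d → ℝ≥0∞) (Q : Cube d) (f : FnSp d)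
    (hm : AEMeasurable f volume) (h1 : N f = 1) :
    (∫⁻ x in Q.set, ENNReal.ofReal |f x|) ≤ dualENormN N (cubeInd Q) := by
  rw [← lint_mul_ind]
  have hf : f ∈ {f : FnSp d | AEMeasurable f volume ∧ N f = 1} := ⟨hm, h1⟩
  exact le_biSup (fun g : FnSp d => ∫⁻ x, ENNReal.ofReal |g x * cubeInd Q x|) hf

lemma dual_le (N : FnSp d → ℝ≥0∞) (Q : Cube d) {B : ℝ≥0∞}
    (hB : ∀ f : FnSp d, AEMeasurable f volume → N f = 1 →
      (∫⁻ x in Q.set, ENNReal.ofReal |f x|) ≤ B) :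
    dualENormN N (cubeInd Q) ≤ B := by
  refine iSup₂_le fun f hf => ?_
  rw [lint_mul_ind]
  exact hB f hf.1 hf.2
lemma lint_le_dual (X : QBFS d) (Q : Cube d) (f : FnSp d)
    (hm : AEMeasurable f volume) (hlt : X.enorm f < ⊤) :
    (∫⁻ x in Q.set, ENNReal.ofReal |f x|) ≤ dualENormN X.enorm (cubeInd Q) * X.enorm f := by
  rcases eq_or_ne (X.enorm f) 0 with h0 | h0
  · have hz := X.enorm_definite f hm h0
    have hz' : ∀ᵐ x ∂(volume.restrict Q.set), ENNReal.ofReal |f x| = 0 := by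
      filter_upwards [ae_restrict_of_ae hz] with x hx
      simp [hx]
    rw [lintegral_congr_ae hz', lintegral_zero]
    exact zero_le
  · set c : ℝ := (X.enorm f).toReal with hc
    have hcpos : 0 < c := ENNReal.toReal_pos h0 hlt.ne
    have hofc : ENNReal.ofReal c = X.enorm f := ENNReal.ofReal_toReal hlt.ne
    have hg1 : X.enorm (c⁻¹ • f) = 1 := by
      rw [X.enorm_smul, abs_of_nonneg (by positivity), ENNReal.ofReal_inv_of_pos hcpos, hofc,
        ENNReal.inv_mul_cancel h0 hlt.ne]
    have key := unit_le_dual X.enorm Q (c⁻¹ • f) (hm.const_smul c⁻¹) hg1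
    have hint : (∫⁻ x in Q.set, ENNReal.ofReal |(c⁻¹ • f) x|)
        = (X.enorm f)⁻¹ * ∫⁻ x in Q.set, ENNReal.ofReal |f x| := by
      have h : ∀ x, ENNReal.ofReal |(c⁻¹ • f) x|
          = (X.enorm f)⁻¹ * ENNReal.ofReal |f x| := by
        intro x
        rw [Pi.smul_apply, smul_eq_mul, abs_mul, ENNReal.ofReal_mul (abs_nonneg _),
          abs_of_nonneg (by positivity : (0:ℝ) ≤ c⁻¹), ENNReal.ofReal_inv_of_pos hcpos, hofc]
      simp only [h]
      rw [lintegral_const_mul' _ _ (by simp [h0] : (X.enorm f)⁻¹ ≠ ⊤)]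
    rw [hint] at key
    calc (∫⁻ x in Q.set, ENNReal.ofReal |f x|)
        = X.enorm f * ((X.enorm f)⁻¹ * ∫⁻ x in Q.set, ENNReal.ofReal |f x|) := by
          rw [← mul_assoc, ENNReal.mul_inv_cancel h0 hlt.ne, one_mul]
      _ ≤ X.enorm f * dualENormN X.enorm (cubeInd Q) := by
          exact mul_le_mul_right key _
      _ = dualENormN X.enorm (cubeInd Q) * X.enorm f := mul_comm _ _
lemma tqbound_main (X : QBFS d) (Q : Cube d) (hD : dualENormN X.enorm (cubeInd Q) < ⊤) :
    TQBound X.enorm Q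
      (X.enorm (cubeInd Q) * dualENormN X.enorm (cubeInd Q) / volume Q.set) := by
  rintro f ⟨hm, hlt⟩
  have hIle : (∫⁻ x in Q.set, ENNReal.ofReal |f x|)
      ≤ dualENormN X.enorm (cubeInd Q) * X.enorm f := lint_le_dual X Q f hm hlt
  have hIlt : (∫⁻ x in Q.set, ENNReal.ofReal |f x|) < ⊤ :=
    hIle.trans_lt (ENNReal.mul_lt_top hD hlt)
  have havg : avg Q f ≠ ⊤ := by
    rw [avg]
    exact (ENNReal.div_lt_top hIlt.ne (cube_vol_pos Q).ne').ne
  refine ⟨havg, ?_⟩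
  rw [enorm_ind_const, abs_of_nonneg ENNReal.toReal_nonneg, ENNReal.ofReal_toReal havg]
  have h1 : avg Q f ≤ dualENormN X.enorm (cubeInd Q) * X.enorm f / volume Q.set :=
    ENNReal.div_le_div_right hIle _
  calc avg Q f * X.enorm (cubeInd Q)
      ≤ (dualENormN X.enorm (cubeInd Q) * X.enorm f / volume Q.set) * X.enorm (cubeInd Q) :=
        mul_le_mul_left h1 _
    _ = X.enorm (cubeInd Q) * dualENormN X.enorm (cubeInd Q) / volume Q.set * X.enorm f := by
        simp only [div_eq_mul_inv]; ring

lemma dual_le_of_bound (X : QBFS d) (Q : Cube d) {C : ℝ≥0∞}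
    (hT : TQBound X.enorm Q C) (h1 : X.enorm (cubeInd Q) < ⊤) :
    dualENormN X.enorm (cubeInd Q) ≤ C * volume Q.set / X.enorm (cubeInd Q) := by
  have hn0 : X.enorm (cubeInd Q) ≠ 0 := (cubeInd_enorm_pos X Q).ne'
  refine dual_le _ _ fun f hm hf1 => ?_
  obtain ⟨hne, hle⟩ := hT f ⟨hm, by rw [hf1]; exact ENNReal.one_lt_top⟩
  rw [enorm_ind_const, abs_of_nonneg ENNReal.toReal_nonneg, ENNReal.ofReal_toReal hne,
    hf1, mul_one] at hle
  have hIeq : (∫⁻ x in Q.set, ENNReal.ofReal |f x|) = avg Q f * volume Q.set := by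
    rw [avg, ENNReal.div_mul_cancel (cube_vol_pos Q).ne' (cube_vol_ne_top Q)]
  rw [hIeq, ENNReal.le_div_iff_mul_le (Or.inl hn0) (Or.inl h1.ne)]
  calc avg Q f * volume Q.set * X.enorm (cubeInd Q)
      = (avg Q f * X.enorm (cubeInd Q)) * volume Q.set := by ring
    _ ≤ C * volume Q.set := mul_le_mul_left hle _

lemma tqbound_lower (X : QBFS d) (Q : Cube d) {C : ℝ≥0∞} (hT : TQBound X.enorm Q C)
    (h1 : X.enorm (cubeInd Q) < ⊤) :
    X.enorm (cubeInd Q) * dualENormN X.enorm (cubeInd Q) / volume Q.set ≤ C := by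
  have hn0 : X.enorm (cubeInd Q) ≠ 0 := (cubeInd_enorm_pos X Q).ne'
  have hDle := dual_le_of_bound X Q hT h1
  rw [ENNReal.div_le_iff (cube_vol_pos Q).ne' (cube_vol_ne_top Q)]
  calc X.enorm (cubeInd Q) * dualENormN X.enorm (cubeInd Q)
      ≤ X.enorm (cubeInd Q) * (C * volume Q.set / X.enorm (cubeInd Q)) :=
        mul_le_mul_right hDle _
    _ = C * volume Q.set := by
        rw [mul_comm, ENNReal.div_mul_cancel hn0 h1.ne]

lemma mem_of_bound (X : QBFS d) (Q : Cube d) {C : ℝ≥0∞} (hC : C < ⊤)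
    (hT : TQBound X.enorm Q C) : X.Mem (cubeInd Q) := by
  obtain ⟨F, hFsub, hFmeas, hFpos, hFnorm⟩ := X.saturation Q.set (cube_meas Q) (cube_vol_pos Q)
  set f : FnSp d := F.indicator fun _ => (1:ℝ) with hf
  have hfm : AEMeasurable f volume := (measurable_const.indicator hFmeas).aemeasurable
  obtain ⟨hne, hle⟩ := hT f ⟨hfm, hFnorm⟩
  have havg : avg Q f = volume F / volume Q.set := by
    rw [avg]
    congr 1
    have h : ∀ x, ENNReal.ofReal |f x| = F.indicator (fun _ => (1:ℝ≥0∞)) x := by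
      intro x
      by_cases hx : x ∈ F <;>
        simp [hf, Set.indicator_of_mem, Set.indicator_of_notMem, hx]
    simp only [h]
    rw [lintegral_indicator hFmeas, setLIntegral_one, Measure.restrict_apply hFmeas,
      Set.inter_eq_self_of_subset_left hFsub]
  have hapos : avg Q f ≠ 0 := by
    rw [havg]
    exact (ENNReal.div_pos hFpos.ne' (cube_vol_ne_top Q)).ne'
  rw [enorm_ind_const, abs_of_nonneg ENNReal.toReal_nonneg, ENNReal.ofReal_toReal hne] at hle
  have hfin : avg Q f * X.enorm (cubeInd Q) < ⊤ :=
    hle.trans_lt (ENNReal.mul_lt_top hC hFnorm)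
  refine ⟨(cubeInd_meas Q).aemeasurable, ?_⟩
  by_contra htop
  rw [not_lt, top_le_iff] at htop
  rw [htop, ENNReal.mul_top hapos] at hfin
  exact lt_irrefl _ hfin

/-- `T_Q : X → X` is bounded iff `1_Q ∈ X` and `1_Q ∈ X'`,
and in that case `‖T_Q‖_{X→X} = |Q|⁻¹ ‖1_Q‖_X ‖1_Q‖_{X'}`. -/
theorem statement0 {d : ℕ} (X : QBFS d) (Q : Cube d) :
    ((∃ C : ℝ≥0∞, C < ⊤ ∧ TQBound X.enorm Q C) ↔
      (X.Mem (cubeInd Q) ∧ MemN (dualENormN X.enorm) (cubeInd Q))) ∧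
    ((X.Mem (cubeInd Q) ∧ MemN (dualENormN X.enorm) (cubeInd Q)) →
      sInf {C : ℝ≥0∞ | TQBound X.enorm Q C} =
        X.enorm (cubeInd Q) * dualENormN X.enorm (cubeInd Q) / volume Q.set) := by
  constructor
  · constructor
    · rintro ⟨C, hC, hT⟩
      have h1 := mem_of_bound X Q hC hT
      refine ⟨h1, (cubeInd_meas Q).aemeasurable, ?_⟩
      exact (dual_le_of_bound X Q hT h1.2).trans_lt
        (ENNReal.div_lt_top (ENNReal.mul_lt_top hC (cube_vol_ne_top Q).lt_top).ne
          (cubeInd_enorm_pos X Q).ne')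
    · rintro ⟨h1, h2⟩
      refine ⟨_, ?_, tqbound_main X Q h2.2⟩
      exact ENNReal.div_lt_top (ENNReal.mul_lt_top h1.2 h2.2).ne (cube_vol_pos Q).ne'
  · rintro ⟨h1, h2⟩
    apply le_antisymm
    · exact sInf_le (tqbound_main X Q h2.2)
    · exact le_sInf fun C hC => tqbound_lower X Q hC h1.2
end
end

section
/- Let X be a quasi-Banach function space over ℝ^d. If X ∈ A, then X' satisfies the saturation property (hence is a Banach function space over ℝ^d) and X' ∈ A with [X']_A ≤ [X]_A. If X is a Banach function space over ℝ^d with the Fatou property, then X ∈ A if and only if X' ∈ A, with [X']_A = [X]_A. The analogous two statements hold with A replaced by A_strong and with A replaced by A_sparse (with the same inequalities and equalities between the corresponding constants). -/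
open MeasureTheory ENNReal Filter

noncomputable section

/-- Saturation of the Köthe dual `X'`. -/
def DualSaturated {d : ℕ} (X : QBFS d) : Prop :=
  ∀ E : Set (Fin d → ℝ), MeasurableSet E → 0 < volume E →
    ∃ F : Set (Fin d → ℝ), F ⊆ E ∧ MeasurableSet F ∧ 0 < volume F ∧
      dualENormN X.enorm (F.indicator fun _ => (1 : ℝ)) < ⊤

namespace LLaux

variable {d : ℕ}

theorem vol_cube_pos (Q : Cube d) : 0 < volume Q.set := by
  rw [Cube.set, Real.volume_Icc_pi]
  rw [CanonicallyOrderedAdd.prod_pos]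
  intro i _
  simpa using Q.side_pos

theorem vol_cube_lt_top (Q : Cube d) : volume Q.set < ⊤ := by
  rw [Cube.set, Real.volume_Icc_pi]
  exact ENNReal.prod_lt_top (fun i _ => by simp)

theorem cube_meas (Q : Cube d) : MeasurableSet Q.set := measurableSet_Icc

theorem enorm_zero (X : QBFS d) : X.enorm 0 = 0 := by
  have h := X.enorm_smul 0 0
  rcases eq_or_ne (X.enorm 0) ⊤ with h0 | h0
  · rw [show ((0:ℝ) • (0:FnSp d)) = 0 by simp, h0] at h
    simp at h
  · rw [show ((0:ℝ) • (0:FnSp d)) = 0 by simp] at h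
    simpa using h

theorem enorm_eq_abs (X : QBFS d) (f : FnSp d) (hf : AEMeasurable f volume) :
    X.enorm (fun x => |f x|) = X.enorm f := by
  apply le_antisymm
  · exact X.ideal f _ hf (continuous_abs.measurable.comp_aemeasurable hf) (Filter.Eventually.of_forall fun x => by simp)
  · exact X.ideal _ f (continuous_abs.measurable.comp_aemeasurable hf) hf (Filter.Eventually.of_forall fun x => by simp)

theorem enorm_zero_of_ae_zero (X : QBFS d) (f : FnSp d) (hf : f =ᵐ[volume] 0) :
    X.enorm f = 0 := by
  rw [X.enorm_congr f 0 hf, enorm_zero]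

theorem enorm_indicator_const (X : QBFS d) (S : Set (Fin d → ℝ)) (c : ℝ) :
    X.enorm (S.indicator fun _ => c) = ENNReal.ofReal |c| * X.enorm (S.indicator fun _ => (1:ℝ)) := by
  rw [← X.enorm_smul]
  congr 1
  funext x
  by_cases hx : x ∈ S <;> simp [Set.indicator_of_mem, Set.indicator_of_notMem, hx]

theorem enorm_indicator_pos (X : QBFS d) {F : Set (Fin d → ℝ)} (hF : MeasurableSet F)
    (hpos : 0 < volume F) : 0 < X.enorm (F.indicator fun _ => (1:ℝ)) := by
  rcases eq_or_ne (X.enorm (F.indicator fun _ => (1:ℝ))) 0 with h0 | h0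
  · exfalso
    have := X.enorm_definite _ ((measurable_const.indicator hF).aemeasurable) h0
    have h1 : volume {x | ¬ (F.indicator (fun _ => (1:ℝ)) x = 0)} = 0 :=
      MeasureTheory.ae_iff.mp this
    have h2 : F ⊆ {x | ¬ (F.indicator (fun _ => (1:ℝ)) x = 0)} := by
      intro x hx
      simp [Set.indicator_of_mem hx, hx]
    exact absurd (le_antisymm (le_trans (measure_mono h2) h1.le) zero_le) hpos.ne'
  · exact pos_iff_ne_zero.mpr h0


theorem dual_le {N : FnSp d → ℝ≥0∞} {g : FnSp d} {C : ℝ≥0∞}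
    (h : ∀ f : FnSp d, AEMeasurable f volume → N f = 1 →
      (∫⁻ x, ENNReal.ofReal |f x * g x|) ≤ C) : dualENormN N g ≤ C :=
  iSup₂_le fun f hf => h f hf.1 hf.2

theorem le_dual {N : FnSp d → ℝ≥0∞} {f : FnSp d} (g : FnSp d)
    (hf : AEMeasurable f volume) (h1 : N f = 1) :
    (∫⁻ x, ENNReal.ofReal |f x * g x|) ≤ dualENormN N g :=
  le_iSup₂ (f := fun f (_ : f ∈ {f : FnSp d | AEMeasurable f volume ∧ N f = 1}) =>
    ∫⁻ x, ENNReal.ofReal |f x * g x|) f ⟨hf, h1⟩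

theorem dual_mono (N : FnSp d → ℝ≥0∞) {g h : FnSp d}
    (hgh : ∀ᵐ x ∂volume, |g x| ≤ |h x|) : dualENormN N g ≤ dualENormN N h := by
  refine iSup₂_mono fun f hf => lintegral_mono_ae ?_
  filter_upwards [hgh] with x hx
  exact ENNReal.ofReal_le_ofReal (by rw [abs_mul, abs_mul]; exact mul_le_mul_of_nonneg_left hx (abs_nonneg _))

theorem dual_congr (N : FnSp d → ℝ≥0∞) {g h : FnSp d}
    (hgh : g =ᵐ[volume] h) : dualENormN N g = dualENormN N h :=
  le_antisymm (dual_mono N (hgh.mono fun x hx => by rw [hx]))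
    (dual_mono N (hgh.mono fun x hx => by rw [hx]))

theorem dual_smul (N : FnSp d → ℝ≥0∞) (c : ℝ) (g : FnSp d) :
    dualENormN N (c • g) = ENNReal.ofReal |c| * dualENormN N g := by
  unfold dualENormN
  rw [ENNReal.mul_iSup]
  apply iSup_congr
  intro f
  rw [ENNReal.mul_iSup]
  apply iSup_congr
  intro _
  rw [← lintegral_const_mul' _ _ ENNReal.ofReal_ne_top]
  congr 1
  funext x
  rw [← ENNReal.ofReal_mul (abs_nonneg _)]
  congr 1
  simp only [Pi.smul_apply, smul_eq_mul, abs_mul]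
  ring

theorem norm_normalize {N : FnSp d → ℝ≥0∞}
    (hsmul : ∀ (c : ℝ) (f : FnSp d), N (c • f) = ENNReal.ofReal |c| * N f)
    {f : FnSp d} (h0 : N f ≠ 0) (ht : N f ≠ ⊤) :
    N (((N f).toReal)⁻¹ • f) = 1 := by
  rw [hsmul]
  have hpos : 0 < (N f).toReal := ENNReal.toReal_pos h0 ht
  rw [abs_of_nonneg (le_of_lt (by positivity)), ENNReal.ofReal_inv_of_pos hpos,
    ENNReal.ofReal_toReal ht, ENNReal.inv_mul_cancel h0 ht]

theorem holder (X : QBFS d) {f : FnSp d} (g : FnSp d) (hf : AEMeasurable f volume)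
    (hft : X.enorm f ≠ ⊤) :
    (∫⁻ x, ENNReal.ofReal |f x * g x|) ≤ X.enorm f * dualENormN X.enorm g := by
  rcases eq_or_ne (X.enorm f) 0 with h0 | h0
  · have hf0 := X.enorm_definite f hf h0
    have : (fun x => ENNReal.ofReal |f x * g x|) =ᵐ[volume] 0 := by
      filter_upwards [hf0] with x hx
      simp [hx]
    rw [lintegral_congr_ae this, h0, zero_mul]
    simp
  · set c : ℝ := ((X.enorm f).toReal)⁻¹ with hc
    have h1 : X.enorm (c • f) = 1 := norm_normalize X.enorm_smul h0 hft
    have h2 := le_dual (N := X.enorm) g (hf.const_smul c) h1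
    have h3 : (∫⁻ x, ENNReal.ofReal |(c • f) x * g x|)
        = (X.enorm f)⁻¹ * ∫⁻ x, ENNReal.ofReal |f x * g x| := by
      have hcnn : (0:ℝ) ≤ c := by
        have : 0 < (X.enorm f).toReal := ENNReal.toReal_pos h0 hft
        positivity
      have hco : ENNReal.ofReal c = (X.enorm f)⁻¹ := by
        rw [hc, ENNReal.ofReal_inv_of_pos (ENNReal.toReal_pos h0 hft), ENNReal.ofReal_toReal hft]
      rw [← hco, ← lintegral_const_mul' _ _ ENNReal.ofReal_ne_top]
      congr 1
      funext x
      rw [← ENNReal.ofReal_mul hcnn]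
      congr 1
      simp only [Pi.smul_apply, smul_eq_mul, abs_mul, abs_of_nonneg hcnn]
      ring
    rw [h3] at h2
    calc (∫⁻ x, ENNReal.ofReal |f x * g x|)
        = X.enorm f * ((X.enorm f)⁻¹ * ∫⁻ x, ENNReal.ofReal |f x * g x|) := by
          rw [← mul_assoc, ENNReal.mul_inv_cancel h0 hft, one_mul]
      _ ≤ X.enorm f * dualENormN X.enorm g := mul_le_mul_right h2 _

theorem dual_dual_le (X : QBFS d) {h : FnSp d} (hm : AEMeasurable h volume)
    (ht : X.enorm h ≠ ⊤) :
    dualENormN (dualENormN X.enorm) h ≤ X.enorm h := by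
  apply dual_le
  intro g hg h1
  calc (∫⁻ x, ENNReal.ofReal |g x * h x|) = ∫⁻ x, ENNReal.ofReal |h x * g x| := by
        simp_rw [mul_comm]
    _ ≤ X.enorm h * dualENormN X.enorm g := holder X g hm ht
    _ = X.enorm h := by rw [h1, mul_one]

theorem dual_pos (X : QBFS d) {g : FnSp d} (hgm : Measurable g)
    (hpos : 0 < volume {x | g x ≠ 0}) : 0 < dualENormN X.enorm g := by
  have hU : {x | g x ≠ 0} = ⋃ n : ℕ, {x | 1/(n+1 : ℝ) ≤ |g x|} := by
    ext x
    simp only [Set.mem_setOf_eq, Set.mem_iUnion]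
    constructor
    · intro hx
      obtain ⟨n, hn⟩ := exists_nat_one_div_lt (abs_pos.mpr hx)
      exact ⟨n, hn.le⟩
    · rintro ⟨n, hn⟩
      intro h0
      rw [h0] at hn
      simp only [abs_zero] at hn
      have : 0 < 1/(n+1:ℝ) := by positivity
      linarith
  have : ∃ n : ℕ, 0 < volume {x | 1/(n+1 : ℝ) ≤ |g x|} := by
    by_contra hcon
    push_neg at hcon
    simp only [le_zero_iff] at hcon
    rw [hU] at hpos
    rw [measure_iUnion_null hcon] at hpos
    exact absurd rfl hpos.ne'
  obtain ⟨n, hn⟩ := this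
  have hmeas : MeasurableSet {x | 1/(n+1 : ℝ) ≤ |g x|} :=
    measurableSet_le measurable_const hgm.abs
  obtain ⟨F, hFA, hFm, hFpos, hFfin⟩ := X.saturation _ hmeas hn
  have hN0 : X.enorm (F.indicator fun _ => (1:ℝ)) ≠ 0 := (enorm_indicator_pos X hFm hFpos).ne'
  set c : ℝ := ((X.enorm (F.indicator fun _ => (1:ℝ))).toReal)⁻¹ with hcdef
  have hcpos : 0 < c := by
    have := ENNReal.toReal_pos hN0 hFfin.ne
    positivity
  set f₀ : FnSp d := c • (F.indicator fun _ => (1:ℝ)) with hf₀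
  have h1 : X.enorm f₀ = 1 := norm_normalize X.enorm_smul hN0 hFfin.ne
  have h2 := le_dual (N := X.enorm) g
    (((measurable_const.indicator hFm).aemeasurable).const_smul c) h1
  refine lt_of_lt_of_le ?_ h2
  calc (0:ℝ≥0∞) < ENNReal.ofReal (c * (1/(n+1:ℝ))) * volume F := by
        apply ENNReal.mul_pos
        · simp only [ne_eq, ENNReal.ofReal_eq_zero, not_le]
          positivity
        · exact hFpos.ne'
    _ = ∫⁻ x in F, ENNReal.ofReal (c * (1/(n+1:ℝ))) := by rw [setLIntegral_const]
    _ ≤ ∫⁻ x in F, ENNReal.ofReal |f₀ x * g x| := by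
        apply setLIntegral_mono' hFm
        intro x hx
        apply ENNReal.ofReal_le_ofReal
        have hgx : 1/(n+1:ℝ) ≤ |g x| := hFA hx
        have : f₀ x = c := by simp [hf₀, Set.indicator_of_mem hx]
        rw [abs_mul, this, abs_of_nonneg hcpos.le]
        apply mul_le_mul_of_nonneg_left hgx hcpos.le
    _ ≤ ∫⁻ x, ENNReal.ofReal |f₀ x * g x| := setLIntegral_le_lintegral _ _



theorem cubeInd_meas (Q : Cube d) : Measurable (cubeInd Q) :=
  measurable_const.indicator (cube_meas Q)

theorem ofReal_abs_mul_cubeInd (Q : Cube d) (f : FnSp d) (x : Fin d → ℝ) :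
    ENNReal.ofReal |f x * cubeInd Q x| = Q.set.indicator (fun y => ENNReal.ofReal |f y|) x := by
  by_cases hx : x ∈ Q.set
  · simp [cubeInd, Set.indicator_of_mem hx]
  · simp [cubeInd, Set.indicator_of_notMem hx]

theorem lint_cube (Q : Cube d) (f : FnSp d) :
    (∫⁻ x, ENNReal.ofReal |f x * cubeInd Q x|) = ∫⁻ x in Q.set, ENNReal.ofReal |f x| := by
  rw [← lintegral_indicator (cube_meas Q)]
  exact lintegral_congr fun x => ofReal_abs_mul_cubeInd Q f x

theorem lint_cube' (Q : Cube d) (f : FnSp d) :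
    (∫⁻ x, ENNReal.ofReal |cubeInd Q x * f x|) = ∫⁻ x in Q.set, ENNReal.ofReal |f x| := by
  rw [← lint_cube]
  exact lintegral_congr fun x => by rw [mul_comm]

theorem lint_cube_le (X : QBFS d) (Q : Cube d) {f : FnSp d} (hf : AEMeasurable f volume)
    (hft : X.enorm f ≠ ⊤) :
    (∫⁻ x in Q.set, ENNReal.ofReal |f x|) ≤ X.enorm f * dualENormN X.enorm (cubeInd Q) := by
  rw [← lint_cube]
  exact holder X (cubeInd Q) hf hft

theorem lint_cube_le' (X : QBFS d) (Q : Cube d) (g : FnSp d)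
    (hQt : X.enorm (cubeInd Q) ≠ ⊤) :
    (∫⁻ x in Q.set, ENNReal.ofReal |g x|) ≤ X.enorm (cubeInd Q) * dualENormN X.enorm g := by
  rw [← lint_cube']
  exact holder X g (cubeInd_meas Q).aemeasurable hQt

theorem avg_lt_top {B : ℝ≥0∞} (Q : Cube d) {f : FnSp d}
    (h : (∫⁻ x in Q.set, ENNReal.ofReal |f x|) ≤ B) (hB : B ≠ ⊤) : avg Q f < ⊤ :=
  ENNReal.div_lt_top (lt_of_le_of_lt h hB.lt_top).ne (vol_cube_pos Q).ne'

theorem lint_avg (Q : Cube d) (f : FnSp d) :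
    (∫⁻ x in Q.set, ENNReal.ofReal |f x|) = avg Q f * volume Q.set := by
  rw [avg, ENNReal.div_mul_cancel (vol_cube_pos Q).ne' (vol_cube_lt_top Q).ne]

theorem countable_of_disjoint {S : Set (Cube d)} {E : Cube d → Set (Fin d → ℝ)}
    (hm : ∀ Q ∈ S, MeasurableSet (E Q)) (hpos : ∀ Q ∈ S, 0 < volume (E Q))
    (hdisj : S.Pairwise fun Q Q' => Disjoint (E Q) (E Q')) : S.Countable := by
  have hcnt := MeasureTheory.Measure.countable_meas_pos_of_disjoint_iUnion
    (ι := ↥S) (μ := volume) (As := fun Q => E Q.1) (fun Q => hm Q.1 Q.2)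
    (fun Q Q' hne => hdisj Q.2 Q'.2 (fun h => hne (Subtype.ext h)))
  have : {i : ↥S | 0 < volume (E i.1)} = Set.univ :=
    Set.eq_univ_of_forall fun Q => hpos Q.1 Q.2
  rw [this] at hcnt
  rw [← Set.countable_coe_iff]
  exact Set.countable_univ_iff.mp hcnt

theorem avgSumE_meas {S : Set (Cube d)} (hc : S.Countable) (f : FnSp d) :
    Measurable (avgSumE S f) := by
  haveI := hc.to_subtype
  exact Measurable.ennreal_tsum fun Q => measurable_const.indicator (cube_meas Q.1)

theorem avgSumE_disj_ne_top {P : Set (Cube d)} (hP : PairwiseDisjointCubes P) {f : FnSp d}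
    (hQ : ∀ Q ∈ P, avg Q f ≠ ⊤) (x : Fin d → ℝ) : avgSumE P f x ≠ ⊤ := by
  by_cases hex : ∃ Q₀ : P, x ∈ Q₀.1.set
  · obtain ⟨Q₀, hx₀⟩ := hex
    rw [avgSumE, tsum_eq_single Q₀ ?_]
    · exact fun h => hQ Q₀.1 Q₀.2 (by
        by_cases hmem : x ∈ Q₀.1.set
        · rwa [Set.indicator_of_mem hmem] at h
        · rw [Set.indicator_of_notMem hmem] at h; simp at h)
    · intro Q hQne
      have hne : Q.1 ≠ Q₀.1 := fun h => hQne (Subtype.ext h)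
      have hd := hP Q.2 Q₀.2 hne
      have : x ∉ Q.1.set := fun hx => (Set.disjoint_left.mp hd hx) hx₀
      rw [Set.indicator_of_notMem this]
  · rw [avgSumE, ENNReal.tsum_eq_zero.mpr]
    · simp
    · intro Q
      apply Set.indicator_of_notMem
      exact fun hx => hex ⟨Q, hx⟩

set_option maxHeartbeats 1000000 in
theorem pairing {S : Set (Cube d)} (hc : S.Countable) (f g : FnSp d)
    (hf : AEMeasurable f volume) :
    (∫⁻ x, ENNReal.ofReal |f x| * avgSumE S g x)
      = ∑' Q : S, avg Q.1 g * ∫⁻ x in Q.1.set, ENNReal.ofReal |f x| := by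
  haveI := hc.to_subtype
  have hfm : AEMeasurable (fun x => ENNReal.ofReal |f x|) volume :=
    ENNReal.measurable_ofReal.comp_aemeasurable (continuous_abs.measurable.comp_aemeasurable hf)
  have h1 : ∀ x, ENNReal.ofReal |f x| * avgSumE S g x
      = ∑' Q : S, Q.1.set.indicator (fun _ => avg Q.1 g) x * ENNReal.ofReal |f x| := by
    intro x
    rw [avgSumE, mul_comm, ENNReal.tsum_mul_right]
  have h2 : ∀ Q : S, ∀ x, Q.1.set.indicator (fun _ => avg Q.1 g) x * ENNReal.ofReal |f x|
      = Q.1.set.indicator (fun y => avg Q.1 g * ENNReal.ofReal |f y|) x := by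
    intro Q x
    by_cases hx : x ∈ Q.1.set
    · simp [Set.indicator_of_mem hx]
    · simp [Set.indicator_of_notMem hx]
  calc (∫⁻ x, ENNReal.ofReal |f x| * avgSumE S g x)
      = ∫⁻ x, ∑' Q : S, Q.1.set.indicator (fun _ => avg Q.1 g) x * ENNReal.ofReal |f x| :=
        lintegral_congr h1
    _ = ∑' Q : S, ∫⁻ x, Q.1.set.indicator (fun _ => avg Q.1 g) x * ENNReal.ofReal |f x| :=
        lintegral_tsum fun Q =>
          ((measurable_const.indicator (cube_meas Q.1)).aemeasurable.mul hfm)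
    _ = ∑' Q : S, avg Q.1 g * ∫⁻ x in Q.1.set, ENNReal.ofReal |f x| := by
        apply tsum_congr
        intro Q
        rw [lintegral_congr (h2 Q), lintegral_indicator (cube_meas Q.1),
          lintegral_const_mul'' _ hfm.restrict]

theorem pairing_symm {S : Set (Cube d)} (hc : S.Countable) (f g : FnSp d)
    (hf : AEMeasurable f volume) (hg : AEMeasurable g volume) :
    (∫⁻ x, ENNReal.ofReal |f x| * avgSumE S g x)
      = ∫⁻ x, ENNReal.ofReal |g x| * avgSumE S f x := by
  rw [pairing hc f g hf, pairing hc g f hg]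
  apply tsum_congr
  intro Q
  rw [avg, avg, ENNReal.div_eq_inv_mul, ENNReal.div_eq_inv_mul]
  ring

theorem lint_toReal_mul {A : (Fin d → ℝ) → ℝ≥0∞} {g : FnSp d}
    (hA : ∀ᵐ x ∂volume, A x ≠ ⊤) :
    (∫⁻ x, ENNReal.ofReal |(fun y => (A y).toReal) x * g x|)
      = ∫⁻ x, ENNReal.ofReal |g x| * A x := by
  apply lintegral_congr_ae
  filter_upwards [hA] with x hx
  rw [abs_mul, abs_of_nonneg ENNReal.toReal_nonneg, ENNReal.ofReal_mul ENNReal.toReal_nonneg,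
    ENNReal.ofReal_toReal hx, mul_comm]

theorem ofReal_toReal_mul_le (A : (Fin d → ℝ) → ℝ≥0∞) (g : FnSp d) (x : Fin d → ℝ) :
    ENNReal.ofReal |(fun y => (A y).toReal) x * g x| ≤ ENNReal.ofReal |g x| * A x := by
  rw [abs_mul, abs_of_nonneg ENNReal.toReal_nonneg, ENNReal.ofReal_mul ENNReal.toReal_nonneg]
  rw [mul_comm]
  exact mul_le_mul_right ENNReal.ofReal_toReal_le _

theorem avgSumE_singleton (Q : Cube d) (f : FnSp d) (x : Fin d → ℝ) :
    avgSumE {Q} f x = Q.set.indicator (fun _ => avg Q f) x := by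
  rw [avgSumE]
  exact tsum_eq_single (⟨Q, rfl⟩ : ({Q} : Set (Cube d)))
    (fun b hb => absurd (Subtype.ext (Set.mem_singleton_iff.mp b.2)) hb)

end LLaux
namespace LLaux

variable {d : ℕ}

theorem measurable_sign : Measurable Real.sign := by
  have h : Real.sign = fun r : ℝ => if r < 0 then (-1:ℝ) else if 0 < r then 1 else 0 := by
    funext r; rfl
  rw [h]
  exact Measurable.ite (measurableSet_lt measurable_id measurable_const) measurable_const
    (Measurable.ite (measurableSet_lt measurable_const measurable_id) measurable_const
      measurable_const)

theorem abs_sign_le_one (y : ℝ) : |Real.sign y| ≤ 1 := by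
  rcases lt_trichotomy y 0 with hy | hy | hy
  · rw [Real.sign_of_neg hy]; norm_num
  · rw [hy, Real.sign_zero]; norm_num
  · rw [Real.sign_of_pos hy]; norm_num

theorem mul_sign_self (y : ℝ) : y * Real.sign y = |y| := by
  rcases lt_trichotomy y 0 with hy | hy | hy
  · rw [Real.sign_of_neg hy, abs_of_neg hy]; ring
  · rw [hy, Real.sign_zero, abs_zero]; ring
  · rw [Real.sign_of_pos hy, abs_of_pos hy]; ring

theorem ind_congr_restrict {R : Set (Fin d → ℝ)} (hR : MeasurableSet R) {f g : FnSp d}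
    (h : f =ᵐ[volume.restrict R] g) : R.indicator f =ᵐ[volume] R.indicator g := by
  have h' : ∀ᵐ x ∂volume, x ∈ R → f x = g x := ae_imp_of_ae_restrict h
  filter_upwards [h'] with x hx
  by_cases hm : x ∈ R
  · rw [Set.indicator_of_mem hm, Set.indicator_of_mem hm, hx hm]
  · rw [Set.indicator_of_notMem hm, Set.indicator_of_notMem hm]

theorem aemeas_ind_of_restrict {R : Set (Fin d → ℝ)} (hR : MeasurableSet R) {f : FnSp d}
    (hf : AEStronglyMeasurable f (volume.restrict R)) :
    AEMeasurable (R.indicator f) volume := by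
  obtain ⟨g, hgm, hfg⟩ := hf
  exact ⟨R.indicator g, hgm.measurable.indicator hR, ind_congr_restrict hR hfg⟩

set_option maxHeartbeats 2000000 in
set_option synthInstance.maxHeartbeats 400000 in
theorem LLbounded (X : QBFS d) (hB : IsBanachFS X) (hF : HasFatou X) (R : Cube d)
    (h : FnSp d) (hm : Measurable h) (h0 : ∀ x, 0 ≤ h x) (M : ℝ)
    (hbd : ∀ x, h x ≤ M) (hsupp : ∀ x, x ∉ R.set → h x = 0)
    (hlt : dualENormN (dualENormN X.enorm) h < 1) : X.enorm h ≤ 1 := by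
  by_contra hNcon
  have hN : 1 < X.enorm h := not_le.mp hNcon
  set μ := volume.restrict R.set with hμ
  haveI : Fact ((1:ℝ≥0∞) ≤ 2) := ⟨by norm_num⟩
  haveI : IsFiniteMeasure μ := by
    constructor
    rw [hμ, Measure.restrict_apply_univ]
    exact vol_cube_lt_top R
  set C : Set (Lp ℝ 2 μ) := {u | X.enorm (R.set.indicator ⇑u) ≤ 1} with hC
  -- convexity
  have hCconv : Convex ℝ C := by
    intro u hu v hv a b ha hb hab
    show X.enorm (R.set.indicator ⇑(a • u + b • v)) ≤ 1
    have hcoe : ⇑(a • u + b • v) =ᵐ[μ] fun x => a * u x + b * v x := by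
      filter_upwards [Lp.coeFn_add (a • u) (b • v), Lp.coeFn_smul a u, Lp.coeFn_smul b v]
        with x h1 h2 h3
      simp only [h1, Pi.add_apply, h2, h3, Pi.smul_apply, smul_eq_mul]
    rw [X.enorm_congr _ _ (ind_congr_restrict (cube_meas R) hcoe)]
    have hsplit : R.set.indicator (fun x => a * u x + b * v x)
        = (a • R.set.indicator ⇑u) + (b • R.set.indicator ⇑v) := by
      funext x
      by_cases hx : x ∈ R.set <;>
        simp [Set.indicator_of_mem, Set.indicator_of_notMem, hx]
    rw [hsplit]
    calc X.enorm ((a • R.set.indicator ⇑u) + (b • R.set.indicator ⇑v))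
        ≤ X.enorm (a • R.set.indicator ⇑u) + X.enorm (b • R.set.indicator ⇑v) := hB _ _
      _ = ENNReal.ofReal |a| * X.enorm (R.set.indicator ⇑u)
          + ENNReal.ofReal |b| * X.enorm (R.set.indicator ⇑v) := by
            rw [X.enorm_smul, X.enorm_smul]
      _ ≤ ENNReal.ofReal |a| * 1 + ENNReal.ofReal |b| * 1 := by
            gcongr
            · exact hu
            · exact hv
      _ = ENNReal.ofReal a + ENNReal.ofReal b := by
            rw [mul_one, mul_one, abs_of_nonneg ha, abs_of_nonneg hb]
      _ = 1 := by rw [← ENNReal.ofReal_add ha hb, hab, ENNReal.ofReal_one]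
  -- closedness
  have hCclosed : IsClosed C := by
    apply IsSeqClosed.isClosed
    intro u w hu huw
    obtain ⟨ns, hns, hae⟩ := (tendstoInMeasure_of_tendsto_Lp huw).exists_seq_tendsto_ae
    set v : ℕ → FnSp d := fun j => R.set.indicator ⇑(u (ns j)) with hv
    have hvmeas : ∀ j, AEMeasurable (v j) volume := fun j =>
      aemeas_ind_of_restrict (cube_meas R) (Lp.aestronglyMeasurable _)
    set W : ℕ → (Fin d → ℝ) → ℝ≥0∞ :=
      fun n x => ⨅ k : ℕ, ENNReal.ofReal |v (k + n) x| with hW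
    have hWle : ∀ n x k, W n x ≤ ENNReal.ofReal |v (k + n) x| := fun n x k => iInf_le _ k
    have hWlt : ∀ n x, W n x < ⊤ := fun n x =>
      lt_of_le_of_lt (hWle n x 0) ENNReal.ofReal_lt_top
    have hWmeas : ∀ n, AEMeasurable (W n) volume := fun n =>
      AEMeasurable.iInf fun k => ((hvmeas _).norm).ennreal_ofReal
    set F : ℕ → FnSp d := fun n x => (W n x).toReal with hFdef
    have hFmeas : ∀ n, AEMeasurable (F n) volume := fun n =>
      ENNReal.measurable_toReal.comp_aemeasurable (hWmeas n)
    have hWmono : ∀ n x, W n x ≤ W (n + 1) x := by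
      intro n x
      apply le_iInf
      intro k
      have : (k + 1) + n = k + (n + 1) := by ring
      exact (iInf_le _ (k + 1)).trans_eq (by rw [this])
    have hFmono : ∀ n x, F n x ≤ F (n+1) x := fun n x =>
      ENNReal.toReal_mono (hWlt (n+1) x).ne (hWmono n x)
    -- limit function
    set g : FnSp d := fun x => |R.set.indicator ⇑w x| with hg
    have hgmeas : AEMeasurable g volume :=
      (aemeas_ind_of_restrict (cube_meas R) (Lp.aestronglyMeasurable _)).norm
    have hlim : ∀ᵐ x ∂volume, Tendsto (fun n => F n x) atTop (nhds (g x)) := by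
      have hae' : ∀ᵐ x ∂volume, x ∈ R.set →
          Tendsto (fun i => ⇑(u (ns i)) x) atTop (nhds (⇑w x)) := ae_imp_of_ae_restrict hae
      filter_upwards [hae'] with x hx
      by_cases hmem : x ∈ R.set
      · have hvx : ∀ j, v j x = ⇑(u (ns j)) x := fun j => Set.indicator_of_mem hmem _
        have hb : Tendsto (fun j => ENNReal.ofReal |v j x|) atTop
            (nhds (ENNReal.ofReal |⇑w x|)) := by
          simp_rw [hvx]
          exact (ENNReal.continuous_ofReal.tendsto _).comp
            ((continuous_abs.tendsto _).comp (hx hmem))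
        have hliminf : Filter.liminf (fun j => ENNReal.ofReal |v j x|) atTop
            = ENNReal.ofReal |⇑w x| := hb.liminf_eq
        have hsup : (⨆ n, W n x) = ENNReal.ofReal |⇑w x| := by
          rw [← hliminf, liminf_eq_iSup_iInf_of_nat']
        have hWtend : Tendsto (fun n => W n x) atTop (nhds (ENNReal.ofReal |⇑w x|)) := by
          rw [← hsup]
          exact tendsto_atTop_iSup (monotone_nat_of_le_succ fun n => hWmono n x)
        have := (ENNReal.tendsto_toReal (ENNReal.ofReal_ne_top)).comp hWtend
        have hgx : g x = |⇑w x| := by rw [hg]; simp [Set.indicator_of_mem hmem]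
        rw [hgx]
        simp only [ENNReal.toReal_ofReal (abs_nonneg _)] at this; exact this
      · have hvx : ∀ j, v j x = 0 := fun j => Set.indicator_of_notMem hmem _
        have hWx : ∀ n, W n x = 0 := by
          intro n
          apply le_antisymm _ zero_le
          exact (hWle n x 0).trans_eq (by rw [hvx]; simp)
        have hgx : g x = 0 := by rw [hg]; simp [Set.indicator_of_notMem hmem]
        rw [hgx]
        have : (fun n => F n x) = fun _ => 0 := by
          funext n; rw [hFdef]; simp [hWx n]
        rw [this]
        exact tendsto_const_nhds
    have hub : ∀ n, X.enorm (F n) ≤ 1 := by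
      intro n
      have hle : ∀ᵐ x ∂volume, |F n x| ≤ |v n x| := by
        apply Filter.Eventually.of_forall
        intro x
        rw [abs_of_nonneg (ENNReal.toReal_nonneg)]
        calc (W n x).toReal ≤ (ENNReal.ofReal |v (0 + n) x|).toReal :=
              ENNReal.toReal_mono ENNReal.ofReal_ne_top (hWle n x 0)
          _ = |v (0 + n) x| := ENNReal.toReal_ofReal (abs_nonneg _)
          _ = |v n x| := by rw [Nat.zero_add]
      exact (X.ideal (v n) (F n) (hvmeas n) (hFmeas n) hle).trans (hu (ns n))
    have hsup : (⨆ n, X.enorm (F n)) ≤ 1 := iSup_le hub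
    have hFatou := hF F g hFmeas hgmeas
      (fun n => Filter.Eventually.of_forall fun x => ⟨ENNReal.toReal_nonneg, hFmono n x⟩)
      hlim (lt_of_le_of_lt hsup ENNReal.one_lt_top)
    have hgle : X.enorm g ≤ 1 := by rw [hFatou]; exact hsup
    show X.enorm (R.set.indicator ⇑w) ≤ 1
    have : X.enorm (R.set.indicator ⇑w) = X.enorm g :=
      (enorm_eq_abs X _ (aemeas_ind_of_restrict (cube_meas R) (Lp.aestronglyMeasurable _))).symm
    rw [this]
    exact hgle
  -- h as an element of L²
  have hMnn : (0:ℝ) ≤ M := le_trans (h0 (fun _ => 0)) (hbd _)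
  have hhmem : MemLp h 2 μ := MemLp.of_bound hm.aestronglyMeasurable.restrict M
    (Filter.Eventually.of_forall fun x => by
      rw [Real.norm_eq_abs, abs_of_nonneg (h0 x)]; exact hbd x)
  set hL : Lp ℝ 2 μ := hhmem.toLp h with hLdef
  have hindh : R.set.indicator ⇑hL =ᵐ[volume] h := by
    have h1 : R.set.indicator ⇑hL =ᵐ[volume] R.set.indicator h :=
      ind_congr_restrict (cube_meas R) (hhmem.coeFn_toLp)
    have h2 : R.set.indicator h = h := by
      funext x
      by_cases hx : x ∈ R.set
      · rw [Set.indicator_of_mem hx]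
      · rw [Set.indicator_of_notMem hx, hsupp x hx]
    rw [h2] at h1
    exact h1
  have hLC : hL ∉ C := by
    intro hcon
    have : X.enorm (R.set.indicator ⇑hL) ≤ 1 := hcon
    rw [X.enorm_congr _ _ hindh] at this
    exact absurd (lt_of_lt_of_le hN this) (lt_irrefl _)
  -- separation
  obtain ⟨φ, s, hφC, hφh⟩ := geometric_hahn_banach_closed_point hCconv hCclosed hLC
  set φv : Lp ℝ 2 μ := (InnerProductSpace.toDual ℝ (Lp ℝ 2 μ)).symm φ with hφv
  have hφrep : ∀ z : Lp ℝ 2 μ, φ z = ∫ x, φv x * z x ∂μ := by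
    intro z
    rw [← InnerProductSpace.toDual_symm_apply (𝕜 := ℝ) (y := φ) (x := z)]
    rw [MeasureTheory.L2.inner_def]
    simp [RCLike.inner_apply, mul_comm, ← hφv]
  -- measurable representative
  have hψae : AEMeasurable (R.set.indicator ⇑φv) volume :=
    aemeas_ind_of_restrict (cube_meas R) (Lp.aestronglyMeasurable φv)
  set ψ : FnSp d := hψae.mk _ with hψdef
  have hψm : Measurable ψ := hψae.measurable_mk
  have hψeq : R.set.indicator ⇑φv =ᵐ[volume] ψ := hψae.ae_eq_mk
  have hψμ : ψ =ᵐ[μ] ⇑φv := by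
    have h1 : R.set.indicator ⇑φv =ᵐ[μ] ψ := ae_restrict_of_ae hψeq
    have h2 : R.set.indicator ⇑φv =ᵐ[μ] ⇑φv := by
      filter_upwards [ae_restrict_mem (cube_meas R)] with x hx
      exact Set.indicator_of_mem hx _
    exact h1.symm.trans h2
  set g : FnSp d := R.set.indicator (fun x => |ψ x|) with hgdef
  have hgm : Measurable g := (hψm.norm).indicator (cube_meas R)
  -- ψ is integrable
  have hψint : Integrable ψ μ := by
    have h1 : MemLp (⇑φv) 1 μ := (Lp.memLp φv).mono_exponent (by norm_num)
    exact (memLp_one_iff_integrable.mp h1).congr hψμ.symm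
  -- 0 ∈ C, hence 0 < s
  have h0C : (0 : Lp ℝ 2 μ) ∈ C := by
    show X.enorm (R.set.indicator ⇑(0 : Lp ℝ 2 μ)) ≤ 1
    have h1 : ⇑(0 : Lp ℝ 2 μ) =ᵐ[μ] (0 : FnSp d) := Lp.coeFn_zero ℝ 2 μ
    have h2 : R.set.indicator (0 : FnSp d) = (0 : FnSp d) := by
      funext x; simp
    rw [X.enorm_congr _ (0:FnSp d) ((ind_congr_restrict (cube_meas R) h1).trans (by rw [h2]))]
    rw [enorm_zero]
    exact zero_le_one
  have hs0 : 0 < s := by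
    have := hφC 0 h0C
    rwa [map_zero] at this
  -- (i) : dual norm of g is at most s
  have hdual_le : dualENormN X.enorm g ≤ ENNReal.ofReal s := by
    apply dual_le
    intro f hfm hf1
    -- rewrite the pairing as an integral over μ
    have hrw : ∀ x, ENNReal.ofReal |f x * g x|
        = R.set.indicator (fun y => ENNReal.ofReal (|f y| * |ψ y|)) x := by
      intro x
      by_cases hx : x ∈ R.set
      · rw [Set.indicator_of_mem hx, hgdef, Set.indicator_of_mem hx, abs_mul, abs_abs]
      · rw [Set.indicator_of_notMem hx, hgdef, Set.indicator_of_notMem hx, mul_zero, abs_zero,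
          ENNReal.ofReal_zero]
    have hstep1 : (∫⁻ x, ENNReal.ofReal |f x * g x|)
        = ∫⁻ x, ENNReal.ofReal (|f x| * |ψ x|) ∂μ := by
      rw [lintegral_congr hrw, lintegral_indicator (cube_meas R)]
    rw [hstep1]
    -- truncations
    have key : ∀ m : ℕ, (∫⁻ x, ENNReal.ofReal (min |f x| (m:ℝ) * |ψ x|) ∂μ) ≤ ENNReal.ofReal s := by
      intro m
      set um : FnSp d := fun x =>
        min |f x| (m:ℝ) * Real.sign (ψ x) * R.set.indicator (fun _ => (1:ℝ)) x with humdef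
      have humm : AEMeasurable um volume := by
        apply AEMeasurable.mul
        · exact (hfm.norm.min aemeasurable_const).mul
            ((measurable_sign.comp hψm).aemeasurable)
        · exact (measurable_const.indicator (cube_meas R)).aemeasurable
      have humb : ∀ x, ‖um x‖ ≤ (m:ℝ) := by
        intro x
        simp only [humdef]
        rw [Real.norm_eq_abs, abs_mul, abs_mul]
        have h1 : |min |f x| (m:ℝ)| ≤ (m:ℝ) := by
          rw [abs_of_nonneg (le_min (abs_nonneg _) (Nat.cast_nonneg _))]
          exact min_le_right _ _
        have h2 : |Real.sign (ψ x)| ≤ 1 := abs_sign_le_one _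
        have h3 : |R.set.indicator (fun _ => (1:ℝ)) x| ≤ 1 := by
          by_cases hx : x ∈ R.set
          · rw [Set.indicator_of_mem hx]; norm_num
          · rw [Set.indicator_of_notMem hx]; norm_num
        calc |min |f x| (m:ℝ)| * |Real.sign (ψ x)| * |R.set.indicator (fun _ => (1:ℝ)) x|
            ≤ (m:ℝ) * 1 * 1 := by
              apply mul_le_mul _ h3 (abs_nonneg _) (by positivity)
              apply mul_le_mul h1 h2 (abs_nonneg _) (Nat.cast_nonneg _)
          _ = (m:ℝ) := by ring
      have hummem : MemLp um 2 μ := MemLp.of_bound (humm.aestronglyMeasurable.restrict) (m:ℝ)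
        (Filter.Eventually.of_forall humb)
      set vm : Lp ℝ 2 μ := hummem.toLp um with hvmdef
      have hvmC : vm ∈ C := by
        show X.enorm (R.set.indicator ⇑vm) ≤ 1
        have h1 : R.set.indicator ⇑vm =ᵐ[volume] R.set.indicator um :=
          ind_congr_restrict (cube_meas R) hummem.coeFn_toLp
        rw [X.enorm_congr _ _ h1]
        have h2 : ∀ᵐ x ∂volume, |R.set.indicator um x| ≤ |f x| := by
          apply Filter.Eventually.of_forall
          intro x
          by_cases hx : x ∈ R.set
          · rw [Set.indicator_of_mem hx]
            simp only [humdef]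
            have hind : R.set.indicator (fun _ => (1:ℝ)) x = 1 := Set.indicator_of_mem hx _
            rw [hind, mul_one, abs_mul]
            calc |min |f x| (m:ℝ)| * |Real.sign (ψ x)| ≤ |min |f x| (m:ℝ)| * 1 :=
                  mul_le_mul_of_nonneg_left (abs_sign_le_one _) (abs_nonneg _)
              _ = |min |f x| (m:ℝ)| := mul_one _
              _ ≤ |f x| := by
                  rw [abs_of_nonneg (le_min (abs_nonneg _) (Nat.cast_nonneg _))]
                  exact min_le_left _ _
          · rw [Set.indicator_of_notMem hx, abs_zero]
            exact abs_nonneg _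
        calc X.enorm (R.set.indicator um) ≤ X.enorm f :=
              X.ideal f _ hfm ((humm.indicator (cube_meas R))) h2
          _ = 1 := hf1
      have hφvm : φ vm < s := hφC vm hvmC
      have hint : ∫ x, φv x * vm x ∂μ = ∫ x, min |f x| (m:ℝ) * |ψ x| ∂μ := by
        apply integral_congr_ae
        have h1 : ⇑vm =ᵐ[μ] um := hummem.coeFn_toLp
        filter_upwards [h1, hψμ, ae_restrict_mem (cube_meas R)] with x h1x h2x hxR
        rw [h1x]
        simp only [humdef]
        have hind : R.set.indicator (fun _ => (1:ℝ)) x = 1 := Set.indicator_of_mem hxR _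
        rw [hind, mul_one, ← h2x]
        calc ψ x * (min |f x| (m:ℝ) * Real.sign (ψ x))
            = min |f x| (m:ℝ) * (ψ x * Real.sign (ψ x)) := by ring
          _ = min |f x| (m:ℝ) * |ψ x| := by rw [mul_sign_self]
      have hIm : ∫ x, min |f x| (m:ℝ) * |ψ x| ∂μ < s := by
        rw [← hint, ← hφrep vm]
        exact hφvm
      have hInt : Integrable (fun x => min |f x| (m:ℝ) * |ψ x|) μ := by
        apply Integrable.mono' (hψint.norm.const_mul (m:ℝ))
        · apply AEStronglyMeasurable.mul _ (hψm.norm.aestronglyMeasurable)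
          exact (hfm.norm.min aemeasurable_const).aestronglyMeasurable.restrict
        · apply Filter.Eventually.of_forall
          intro x
          rw [Real.norm_eq_abs, abs_mul, abs_of_nonneg (abs_nonneg (ψ x))]
          apply mul_le_mul_of_nonneg_right _ (abs_nonneg _)
          rw [abs_of_nonneg (le_min (abs_nonneg _) (Nat.cast_nonneg _))]
          exact min_le_right _ _
      have := MeasureTheory.ofReal_integral_eq_lintegral_ofReal hInt
        (Filter.Eventually.of_forall fun x =>
          mul_nonneg (le_min (abs_nonneg _) (Nat.cast_nonneg _)) (abs_nonneg _))
      rw [← this]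
      exact ENNReal.ofReal_le_ofReal hIm.le
    -- monotone convergence
    have hptwise : ∀ x, (⨆ m : ℕ, ENNReal.ofReal (min |f x| (m:ℝ) * |ψ x|))
        = ENNReal.ofReal (|f x| * |ψ x|) := by
      intro x
      obtain ⟨m₀, hm₀⟩ := exists_nat_ge |f x|
      have hev : ENNReal.ofReal (min |f x| (m₀:ℝ) * |ψ x|)
          = ENNReal.ofReal (|f x| * |ψ x|) := by
        congr 2
        rw [min_eq_left hm₀]
      apply le_antisymm
      · apply iSup_le
        intro m
        apply ENNReal.ofReal_le_ofReal
        apply mul_le_mul_of_nonneg_right _ (abs_nonneg _)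
        exact min_le_left _ _
      · exact le_trans hev.symm.le
          (le_iSup (fun m : ℕ => ENNReal.ofReal (min |f x| (m:ℝ) * |ψ x|)) m₀)
    have hmeasm : ∀ m : ℕ, AEMeasurable
        (fun x => ENNReal.ofReal (min |f x| (m:ℝ) * |ψ x|)) μ := by
      intro m
      apply AEMeasurable.ennreal_ofReal
      exact ((hfm.norm.min aemeasurable_const).restrict).mul (hψm.norm.aemeasurable.restrict)
    have hmonom : ∀ᵐ x ∂μ, Monotone
        (fun m : ℕ => ENNReal.ofReal (min |f x| (m:ℝ) * |ψ x|)) := by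
      apply Filter.Eventually.of_forall
      intro x i j hij
      apply ENNReal.ofReal_le_ofReal
      apply mul_le_mul_of_nonneg_right _ (abs_nonneg _)
      exact min_le_min le_rfl (by exact_mod_cast hij)
    have hmct : (∫⁻ x, ENNReal.ofReal (|f x| * |ψ x|) ∂μ)
        = ⨆ m : ℕ, ∫⁻ x, ENNReal.ofReal (min |f x| (m:ℝ) * |ψ x|) ∂μ := by
      rw [← lintegral_iSup' hmeasm hmonom]
      exact lintegral_congr fun x => (hptwise x).symm
    rw [hmct]
    exact iSup_le key
  -- (ii) : the pairing against h is larger than s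
  have hs_lt : ENNReal.ofReal s < ∫⁻ x, ENNReal.ofReal |h x * g x| := by
    have hφhL : φ hL = ∫ x, φv x * h x ∂μ := by
      rw [hφrep hL]
      apply integral_congr_ae
      filter_upwards [hhmem.coeFn_toLp] with x hx
      rw [hx]
    have hinth : Integrable (fun x => φv x * h x) μ := by
      apply Integrable.mono' ((memLp_one_iff_integrable.mp
        ((Lp.memLp φv).mono_exponent (by norm_num))).norm.const_mul M)
      · exact (Lp.aestronglyMeasurable φv).mul hm.aestronglyMeasurable.restrict
      · apply Filter.Eventually.of_forall
        intro x
        rw [Real.norm_eq_abs, abs_mul, mul_comm M _, Real.norm_eq_abs]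
        apply mul_le_mul_of_nonneg_left _ (abs_nonneg _)
        rw [abs_of_nonneg (h0 x)]
        exact hbd x
    have hinth2 : Integrable (fun x => |ψ x| * h x) μ := by
      apply Integrable.mono' (hψint.norm.const_mul M)
      · exact (hψm.norm.aestronglyMeasurable.restrict).mul hm.aestronglyMeasurable.restrict
      · apply Filter.Eventually.of_forall
        intro x
        rw [Real.norm_eq_abs, abs_mul, abs_of_nonneg (abs_nonneg (ψ x)), mul_comm M _,
          Real.norm_eq_abs]
        apply mul_le_mul_of_nonneg_left _ (abs_nonneg _)
        rw [abs_of_nonneg (h0 x)]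
        exact hbd x
    have hmono : ∫ x, φv x * h x ∂μ ≤ ∫ x, |ψ x| * h x ∂μ := by
      apply integral_mono_ae hinth hinth2
      filter_upwards [hψμ] with x hx
      rw [← hx]
      exact mul_le_mul_of_nonneg_right (le_abs_self _) (h0 x)
    have hslt2 : s < ∫ x, |ψ x| * h x ∂μ := lt_of_lt_of_le (by rw [← hφhL]; exact hφh) hmono
    have heq : (∫⁻ x, ENNReal.ofReal |h x * g x|) = ∫⁻ x, ENNReal.ofReal (|ψ x| * h x) ∂μ := by
      have hrw : ∀ x, ENNReal.ofReal |h x * g x|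
          = R.set.indicator (fun y => ENNReal.ofReal (|ψ y| * h y)) x := by
        intro x
        by_cases hx : x ∈ R.set
        · rw [Set.indicator_of_mem hx, hgdef, Set.indicator_of_mem hx, abs_mul, abs_abs,
            abs_of_nonneg (h0 x), mul_comm]
        · rw [Set.indicator_of_notMem hx, hgdef, Set.indicator_of_notMem hx, mul_zero, abs_zero,
            ENNReal.ofReal_zero]
      rw [lintegral_congr hrw, lintegral_indicator (cube_meas R)]
    rw [heq, ← MeasureTheory.ofReal_integral_eq_lintegral_ofReal hinth2
      (Filter.Eventually.of_forall fun x => mul_nonneg (abs_nonneg _) (h0 x))]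
    exact (ENNReal.ofReal_lt_ofReal_iff (lt_trans hs0 hslt2)).mpr hslt2
  -- (iii) : the dual norm of g is positive
  have hgne : 0 < volume {x | g x ≠ 0} := by
    by_contra hcon
    push_neg at hcon
    have hzero : volume {x | g x ≠ 0} = 0 := le_antisymm hcon zero_le
    have hsub : {x | h x * g x ≠ 0} ⊆ {x | g x ≠ 0} := by
      intro x hx
      exact fun hg0 => hx (by rw [Set.mem_setOf_eq] at *; rw [hg0, mul_zero])
    have hzero2 : volume {x | h x * g x ≠ 0} = 0 :=
      le_antisymm ((measure_mono hsub).trans hzero.le) zero_le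
    have hae0 : ∀ᵐ x ∂volume, h x * g x = 0 := by
      rw [MeasureTheory.ae_iff]
      exact hzero2
    have : (∫⁻ x, ENNReal.ofReal |h x * g x|) = 0 := by
      rw [lintegral_eq_zero_iff' (f := fun x => ENNReal.ofReal |h x * g x|)
        (((hm.mul hgm).abs.ennreal_ofReal).aemeasurable)]
      filter_upwards [hae0] with x hx
      simp [hx]
    rw [this] at hs_lt
    exact absurd hs_lt (by simp [ENNReal.ofReal_pos, not_lt, hs0.le])
  have hgpos : 0 < dualENormN X.enorm g := dual_pos X hgm hgne
  -- (v) : conclude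
  set r : ℝ≥0∞ := dualENormN X.enorm g with hrdef
  have hrne : r ≠ ⊤ := (lt_of_le_of_lt hdual_le ENNReal.ofReal_lt_top).ne
  have hr0 : r ≠ 0 := hgpos.ne'
  set g'' : FnSp d := (r.toReal)⁻¹ • g with hg''def
  have hg''1 : dualENormN X.enorm g'' = 1 := by
    rw [hg''def, hrdef]
    exact norm_normalize (fun c f => dual_smul X.enorm c f) hr0 hrne
  have hg''m : AEMeasurable g'' volume := hgm.aemeasurable.const_smul _
  have hterm : (∫⁻ x, ENNReal.ofReal |g'' x * h x|)
      = r⁻¹ * ∫⁻ x, ENNReal.ofReal |h x * g x| := by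
    have hco : ENNReal.ofReal (r.toReal)⁻¹ = r⁻¹ := by
      rw [ENNReal.ofReal_inv_of_pos (ENNReal.toReal_pos hr0 hrne), ENNReal.ofReal_toReal hrne]
    rw [← hco, ← lintegral_const_mul' _ _ ENNReal.ofReal_ne_top]
    apply lintegral_congr
    intro x
    rw [← ENNReal.ofReal_mul (by positivity)]
    congr 1
    rw [hg''def]
    simp only [Pi.smul_apply, smul_eq_mul]
    rw [abs_mul, abs_mul, abs_of_nonneg (by positivity : (0:ℝ) ≤ (r.toReal)⁻¹), abs_mul]
    ring
  have hbig : 1 < ∫⁻ x, ENNReal.ofReal |g'' x * h x| := by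
    rw [hterm]
    have h1 : r < ∫⁻ x, ENNReal.ofReal |h x * g x| := lt_of_le_of_lt hdual_le hs_lt
    calc (1:ℝ≥0∞) = r⁻¹ * r := (ENNReal.inv_mul_cancel hr0 hrne).symm
      _ < r⁻¹ * ∫⁻ x, ENNReal.ofReal |h x * g x| := by
          rw [ENNReal.mul_lt_mul_iff_right (by simp [hrne]) (by simp [hr0])]
          exact h1
  have hfin := le_dual (N := dualENormN X.enorm) h hg''m hg''1
  exact absurd (lt_of_lt_of_le hbig hfin) (not_lt.mpr hlt.le)


theorem LLbdd (X : QBFS d) (hB : IsBanachFS X) (hF : HasFatou X) (R : Cube d)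
    (h : FnSp d) (hm : Measurable h) (h0 : ∀ x, 0 ≤ h x) (M : ℝ)
    (hbd : ∀ x, h x ≤ M) (hsupp : ∀ x, x ∉ R.set → h x = 0) :
    X.enorm h ≤ dualENormN (dualENormN X.enorm) h := by
  set D := dualENormN (dualENormN X.enorm) h with hD
  rcases eq_or_ne D ⊤ with hDtop | hDtop
  · rw [hDtop]; exact le_top
  apply le_of_forall_gt_imp_ge_of_dense
  intro b hb
  rcases eq_or_ne b ⊤ with hbtop | hbtop
  · rw [hbtop]; exact le_top
  set t : ℝ := b.toReal with ht
  have htpos : 0 < t := ENNReal.toReal_pos (pos_of_gt hb).ne' hbtop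
  have hbt : ENNReal.ofReal t = b := ENNReal.ofReal_toReal hbtop
  set h₁ : FnSp d := t⁻¹ • h with hh₁
  have hsc : dualENormN (dualENormN X.enorm) h₁ < 1 := by
    rw [hh₁, dual_smul, abs_of_nonneg (by positivity : (0:ℝ) ≤ t⁻¹), ← hD]
    have h2 : ENNReal.ofReal t⁻¹ * D < ENNReal.ofReal t⁻¹ * ENNReal.ofReal t := by
      rw [ENNReal.mul_lt_mul_iff_right (by simp [ENNReal.ofReal_pos, htpos] : ENNReal.ofReal t⁻¹ ≠ 0)
        ENNReal.ofReal_ne_top]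
      rw [hbt]
      exact hb
    calc ENNReal.ofReal t⁻¹ * D < ENNReal.ofReal t⁻¹ * ENNReal.ofReal t := h2
      _ = ENNReal.ofReal (t⁻¹ * t) := (ENNReal.ofReal_mul (by positivity)).symm
      _ = 1 := by rw [inv_mul_cancel₀ htpos.ne', ENNReal.ofReal_one]
  have hle1 : X.enorm h₁ ≤ 1 := by
    apply LLbounded X hB hF R h₁ (hm.const_smul (t⁻¹)) _ (t⁻¹ * M) _ _ hsc
    · intro x
      simp only [hh₁, Pi.smul_apply, smul_eq_mul]
      exact mul_nonneg (by positivity) (h0 x)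
    · intro x
      simp only [hh₁, Pi.smul_apply, smul_eq_mul]
      exact mul_le_mul_of_nonneg_left (hbd x) (by positivity)
    · intro x hx
      simp only [hh₁, Pi.smul_apply, smul_eq_mul, hsupp x hx, mul_zero]
  have hht : h = t • h₁ := by
    funext x
    simp only [hh₁, Pi.smul_apply, smul_eq_mul]
    field_simp
  calc X.enorm h = X.enorm (t • h₁) := by rw [← hht]
    _ = ENNReal.ofReal |t| * X.enorm h₁ := X.enorm_smul t h₁
    _ ≤ ENNReal.ofReal |t| * 1 := mul_le_mul_right hle1 _
    _ = b := by rw [mul_one, abs_of_nonneg htpos.le, hbt]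

theorem LL (X : QBFS d) (hB : IsBanachFS X) (hF : HasFatou X) (h : FnSp d)
    (hm : AEMeasurable h volume) :
    X.enorm h ≤ dualENormN (dualENormN X.enorm) h := by
  set h' : FnSp d := hm.mk h with hh'
  have hm' : Measurable h' := hm.measurable_mk
  rw [X.enorm_congr _ _ hm.ae_eq_mk, dual_congr _ hm.ae_eq_mk]
  set Qn : ℕ → Cube d := fun n => ⟨fun _ => -(n+1:ℝ), 2*(n+1), by positivity⟩ with hQn
  set hn : ℕ → FnSp d := fun n => (Qn n).set.indicator (fun y => min |h' y| (n:ℝ)) with hhn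
  have hnmeas : ∀ n, Measurable (hn n) :=
    fun n => (hm'.norm.min measurable_const).indicator (cube_meas _)
  have hnnn : ∀ n x, 0 ≤ hn n x := by
    intro n x
    by_cases hx : x ∈ (Qn n).set
    · simp only [hhn]
      rw [Set.indicator_of_mem hx]
      exact le_min (abs_nonneg _) (Nat.cast_nonneg _)
    · simp only [hhn]
      rw [Set.indicator_of_notMem hx]
  have hQsub : ∀ n, (Qn n).set ⊆ (Qn (n+1)).set := by
    intro n
    apply Set.Icc_subset_Icc
    · intro i
      simp only [hQn]
      push_cast
      linarith
    · intro i
      simp only [hQn]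
      push_cast
      linarith
  have hmono : ∀ n x, hn n x ≤ hn (n+1) x := by
    intro n x
    by_cases hx : x ∈ (Qn n).set
    · simp only [hhn]
      rw [Set.indicator_of_mem hx, Set.indicator_of_mem (hQsub n hx)]
      exact min_le_min le_rfl (by exact_mod_cast Nat.le_succ n)
    · simp only [hhn]
      rw [Set.indicator_of_notMem hx]
      exact hnnn (n+1) x
  have hmem : ∀ x, ∃ n₀ : ℕ, ∀ n ≥ n₀, hn n x = |h' x| := by
    intro x
    obtain ⟨n₀, hn₀⟩ := exists_nat_ge (max ‖x‖ |h' x|)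
    refine ⟨n₀, fun n hn' => ?_⟩
    have hxi : ∀ i, |x i| ≤ (n:ℝ) := by
      intro i
      calc |x i| = ‖x i‖ := (Real.norm_eq_abs _).symm
        _ ≤ ‖x‖ := norm_le_pi_norm x i
        _ ≤ (n₀:ℝ) := (le_max_left _ _).trans hn₀
        _ ≤ (n:ℝ) := Nat.cast_le.mpr hn'
    have hxn : x ∈ (Qn n).set := by
      simp only [hQn, Cube.set, Set.mem_Icc, Pi.le_def]
      constructor
      · intro i
        have := (abs_le.mp (hxi i)).1
        linarith
      · intro i
        have := (abs_le.mp (hxi i)).2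
        linarith
    simp only [hhn]
    rw [Set.indicator_of_mem hxn]
    apply min_eq_left
    exact le_trans ((le_max_right _ _).trans hn₀) (Nat.cast_le.mpr hn')
  have hboundn : ∀ n, X.enorm (hn n) ≤ dualENormN (dualENormN X.enorm) h' := by
    intro n
    have h1 := LLbdd X hB hF (Qn n) (hn n) (hnmeas n) (hnnn n) (n:ℝ)
      (fun x => by
        by_cases hx : x ∈ (Qn n).set
        · simp only [hhn]
          rw [Set.indicator_of_mem hx]
          exact min_le_right _ _
        · simp only [hhn]
          rw [Set.indicator_of_notMem hx]
          exact Nat.cast_nonneg _)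
      (fun x hx => by
        simp only [hhn]
        rw [Set.indicator_of_notMem hx])
    refine h1.trans (dual_mono _ (Filter.Eventually.of_forall fun x => ?_))
    rw [abs_of_nonneg (hnnn n x)]
    by_cases hx : x ∈ (Qn n).set
    · simp only [hhn]
      rw [Set.indicator_of_mem hx]; exact min_le_left _ _
    · simp only [hhn]
      rw [Set.indicator_of_notMem hx]; exact abs_nonneg _
  rcases eq_or_ne (⨆ n, X.enorm (hn n)) ⊤ with hsup | hsup
  · have : dualENormN (dualENormN X.enorm) h' = ⊤ := by
      apply top_le_iff.mp
      rw [← hsup]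
      exact iSup_le hboundn
    rw [this]
    exact le_top
  · have hFatou := hF hn (fun x => |h' x|) (fun n => (hnmeas n).aemeasurable) hm'.norm.aemeasurable
      (fun n => Filter.Eventually.of_forall fun x => ⟨hnnn n x, hmono n x⟩)
      (Filter.Eventually.of_forall fun x => by
        obtain ⟨n₀, hn₀⟩ := hmem x
        exact tendsto_atTop_of_eventually_const hn₀)
      (lt_of_le_of_lt (le_refl _) hsup.lt_top)
    rw [← enorm_eq_abs X h' hm'.aemeasurable, hFatou]
    exact iSup_le hboundn

end LLaux
namespace LLaux

variable {d : ℕ}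

theorem ofReal_abs_ind (F : Set (Fin d → ℝ)) (x : Fin d → ℝ) :
    ENNReal.ofReal |F.indicator (fun _ => (1:ℝ)) x| = F.indicator (fun _ => (1:ℝ≥0∞)) x := by
  by_cases hx : x ∈ F
  · simp [Set.indicator_of_mem hx]
  · simp [Set.indicator_of_notMem hx]

theorem lint_ind_mul {F : Set (Fin d → ℝ)} (hFm : MeasurableSet F)
    (A : (Fin d → ℝ) → ℝ≥0∞) :
    (∫⁻ x, F.indicator (fun _ => (1:ℝ≥0∞)) x * A x) = ∫⁻ x in F, A x := by
  rw [← lintegral_indicator hFm]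
  apply lintegral_congr
  intro x
  by_cases hx : x ∈ F
  · simp [Set.indicator_of_mem hx]
  · simp [Set.indicator_of_notMem hx]

/-- The norm of the single-cube averaging operator output. -/
theorem norm_avgSum_single {N : FnSp d → ℝ≥0∞}
    (hsmul : ∀ (c : ℝ) (f : FnSp d), N (c • f) = ENNReal.ofReal |c| * N f)
    (Q : Cube d) (f : FnSp d) :
    N (fun x => (avgSumE {Q} f x).toReal)
      = ENNReal.ofReal ((avg Q f).toReal) * N (cubeInd Q) := by
  have h1 : (fun x => (avgSumE {Q} f x).toReal)
      = ((avg Q f).toReal) • (cubeInd Q) := by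
    funext x
    rw [avgSumE_singleton]
    by_cases hx : x ∈ Q.set
    · simp [Set.indicator_of_mem hx, cubeInd]
    · simp [Set.indicator_of_notMem hx, cubeInd]
  rw [h1, hsmul, abs_of_nonneg ENNReal.toReal_nonneg]

theorem avg_ne_top_of_aefin (Q : Cube d) {f : FnSp d}
    (h : ∀ᵐ x ∂volume, avgSumE {Q} f x ≠ ⊤) : avg Q f ≠ ⊤ := by
  by_contra htop
  have h2 : ∀ᵐ x ∂volume, x ∉ Q.set := by
    filter_upwards [h] with x hx
    intro hmem
    apply hx
    rw [avgSumE_singleton, Set.indicator_of_mem hmem, htop]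
  have h3 : volume Q.set = 0 := by
    have := MeasureTheory.ae_iff.mp h2
    simpa using this
  exact absurd h3 (vol_cube_pos Q).ne'

theorem avg_indicator (Q : Cube d) {F : Set (Fin d → ℝ)} (hFm : MeasurableSet F)
    (hFQ : F ⊆ Q.set) :
    avg Q (F.indicator fun _ => (1:ℝ)) = volume F / volume Q.set := by
  rw [avg]
  congr 1
  calc (∫⁻ x in Q.set, ENNReal.ofReal |F.indicator (fun _ => (1:ℝ)) x|)
      = ∫⁻ x in Q.set, F.indicator (fun _ => (1:ℝ≥0∞)) x :=
        lintegral_congr fun x => ofReal_abs_ind F x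
    _ = 1 * volume (F ∩ Q.set) := by
        rw [lintegral_indicator_const hFm, Measure.restrict_apply hFm]
    _ = volume F := by rw [one_mul, Set.inter_eq_self_of_subset_left hFQ]

theorem singleton_sparse (Q : Cube d) : IsSparse (1/2) ({Q} : Set (Cube d)) := by
  refine ⟨fun Q' => Q'.set, ?_, Set.pairwise_singleton _ _⟩
  intro Q' _
  refine ⟨cube_meas Q', le_refl _, ?_⟩
  calc ENNReal.ofReal (1/2) * volume Q'.set ≤ 1 * volume Q'.set := by
        apply mul_le_mul_left
        rw [show ((1:ℝ)/2) = (0.5:ℝ) by norm_num]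
        calc ENNReal.ofReal 0.5 ≤ ENNReal.ofReal 1 := ENNReal.ofReal_le_ofReal (by norm_num)
          _ = 1 := ENNReal.ofReal_one
    _ = volume Q'.set := one_mul _

/-- Facts about cubes obtained from single-cube bounds on the base space. -/
theorem cube_facts (X : QBFS d) {C : ℝ≥0∞} (hC : C ≠ ⊤)
    (hb : ∀ Q : Cube d, SparseBoundOneN X.enorm {Q} C) (Q : Cube d) :
    X.enorm (cubeInd Q) < ⊤ ∧ dualENormN X.enorm (cubeInd Q) < ⊤ := by
  obtain ⟨F, hFQ, hFm, hFpos, hFfin⟩ := X.saturation Q.set (cube_meas Q) (vol_cube_pos Q)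
  set f₀ : FnSp d := F.indicator fun _ => (1:ℝ) with hf₀
  have hf₀m : AEMeasurable f₀ volume := (measurable_const.indicator hFm).aemeasurable
  obtain ⟨hae, hmeas, hnorm⟩ := hb Q f₀ ⟨hf₀m, hFfin⟩
  have havg : avg Q f₀ = volume F / volume Q.set := avg_indicator Q hFm hFQ
  have havg_pos : avg Q f₀ ≠ 0 := by
    rw [havg]
    exact (ENNReal.div_pos hFpos.ne' (vol_cube_lt_top Q).ne).ne'
  have havg_fin : avg Q f₀ ≠ ⊤ := by
    rw [havg]
    exact (ENNReal.div_lt_top ((measure_mono hFQ).trans_lt (vol_cube_lt_top Q)).ne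
      (vol_cube_pos Q).ne').ne
  rw [norm_avgSum_single X.enorm_smul, ENNReal.ofReal_toReal havg_fin] at hnorm
  have hXQ : X.enorm (cubeInd Q) < ⊤ := by
    by_contra htop
    push_neg at htop
    rw [top_le_iff.mp htop, ENNReal.mul_top havg_pos] at hnorm
    exact absurd (top_le_iff.mp hnorm) (ENNReal.mul_lt_top hC.lt_top hFfin).ne
  refine ⟨hXQ, ?_⟩
  have hN0 : X.enorm (cubeInd Q) ≠ 0 :=
    (enorm_indicator_pos X (cube_meas Q) (vol_cube_pos Q)).ne'
  have hbound : dualENormN X.enorm (cubeInd Q)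
      ≤ (C / X.enorm (cubeInd Q)) * volume Q.set := by
    apply dual_le
    intro f hfm hf1
    obtain ⟨hae2, _, hnorm2⟩ := hb Q f ⟨hfm, by rw [hf1]; exact ENNReal.one_lt_top⟩
    have hfin2 : avg Q f ≠ ⊤ := avg_ne_top_of_aefin Q hae2
    rw [norm_avgSum_single X.enorm_smul, ENNReal.ofReal_toReal hfin2, hf1, mul_one] at hnorm2
    have havgle : avg Q f ≤ C / X.enorm (cubeInd Q) :=
      (ENNReal.le_div_iff_mul_le (Or.inl hN0) (Or.inl hXQ.ne)).mpr hnorm2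
    rw [lint_cube, lint_avg]
    exact mul_le_mul_left havgle _
  apply lt_of_le_of_lt hbound
  apply ENNReal.mul_lt_top _ (vol_cube_lt_top Q)
  exact ENNReal.div_lt_top hC hN0

/-- Corresponding facts from single-cube bounds on the dual space. -/
theorem cube_dual_facts (X : QBFS d) {C : ℝ≥0∞} (hC : C ≠ ⊤)
    (hb : ∀ Q : Cube d, SparseBoundOneN (dualENormN X.enorm) {Q} C)
    (hex : ∀ Q : Cube d, ∃ g₀, MemN (dualENormN X.enorm) g₀ ∧ 0 < avg Q g₀)
    (Q : Cube d) : dualENormN X.enorm (cubeInd Q) < ⊤ := by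
  obtain ⟨g₀, hg₀mem, hg₀pos⟩ := hex Q
  obtain ⟨hae, _, hnorm⟩ := hb Q g₀ hg₀mem
  have hfin : avg Q g₀ ≠ ⊤ := avg_ne_top_of_aefin Q hae
  rw [norm_avgSum_single (fun c f => dual_smul X.enorm c f), ENNReal.ofReal_toReal hfin]
    at hnorm
  rw [mul_comm] at hnorm
  have := (ENNReal.le_div_iff_mul_le (Or.inl hg₀pos.ne') (Or.inl hfin)).mpr hnorm
  apply lt_of_le_of_lt this
  apply ENNReal.div_lt_top _ hg₀pos.ne'
  exact ENNReal.mul_ne_top hC hg₀mem.2.ne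

theorem exists_dual_mem (X : QBFS d) (hB : IsBanachFS X) (hF : HasFatou X) (Q : Cube d) :
    ∃ g₀, MemN (dualENormN X.enorm) g₀ ∧ 0 < avg Q g₀ := by
  obtain ⟨F, hFQ, hFm, hFpos, hFfin⟩ := X.saturation Q.set (cube_meas Q) (vol_cube_pos Q)
  set f₀ : FnSp d := F.indicator fun _ => (1:ℝ) with hf₀
  have hf₀m : AEMeasurable f₀ volume := (measurable_const.indicator hFm).aemeasurable
  have h1 : 0 < X.enorm f₀ := enorm_indicator_pos X hFm hFpos
  have h2 : 0 < dualENormN (dualENormN X.enorm) f₀ := lt_of_lt_of_le h1 (LL X hB hF f₀ hf₀m)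
  rw [dualENormN] at h2
  rw [lt_iSup_iff] at h2
  obtain ⟨g₀, hg₀⟩ := h2
  rw [lt_iSup_iff] at hg₀
  obtain ⟨⟨hg₀m, hg₀1⟩, hg₀pos⟩ := hg₀
  refine ⟨g₀, ⟨hg₀m, by rw [hg₀1]; exact ENNReal.one_lt_top⟩, ?_⟩
  have hle : (∫⁻ x, ENNReal.ofReal |g₀ x * f₀ x|) ≤ ∫⁻ x in Q.set, ENNReal.ofReal |g₀ x| := by
    rw [← lintegral_indicator (cube_meas Q)]
    apply lintegral_mono
    intro x
    by_cases hx : x ∈ F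
    · rw [Set.indicator_of_mem (hFQ hx)]
      apply ENNReal.ofReal_le_ofReal
      simp only [hf₀]
      rw [Set.indicator_of_mem hx, mul_one]
    · simp only [hf₀]
      rw [Set.indicator_of_notMem hx, mul_zero, abs_zero, ENNReal.ofReal_zero]
      exact zero_le
  have hnum : 0 < ∫⁻ x in Q.set, ENNReal.ofReal |g₀ x| := lt_of_lt_of_le hg₀pos hle
  rw [avg]
  exact ENNReal.div_pos hnum.ne' (vol_cube_lt_top Q).ne

end LLaux
namespace LLaux

variable {d : ℕ}

/-- Forward a.e. finiteness: `A_S g` is a.e. finite for `g` in the Köthe dual. -/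
theorem forward_aefin (X : QBFS d) {S : Set (Cube d)} (hc : S.Countable)
    {C₀ : ℝ≥0∞} (hC₀ : C₀ ≠ ⊤) (hb₀ : SparseBoundOneN X.enorm S C₀)
    {g : FnSp d} (hg : MemN (dualENormN X.enorm) g) :
    ∀ᵐ x ∂volume, avgSumE S g x ≠ ⊤ := by
  set T : Set (Fin d → ℝ) := {x | avgSumE S g x = ⊤} with hT
  have hTm : MeasurableSet T := (avgSumE_meas hc g) (measurableSet_singleton ⊤)
  by_cases hTvol : volume T = 0
  · rw [MeasureTheory.ae_iff]
    convert hTvol using 2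
    ext x
    simp [hT]
  · exfalso
    have hTpos : 0 < volume T := pos_iff_ne_zero.mpr hTvol
    obtain ⟨F, hFT, hFm, hFpos, hFfin⟩ := X.saturation T hTm hTpos
    set f₀ : FnSp d := F.indicator fun _ => (1:ℝ) with hf₀
    have hf₀m : AEMeasurable f₀ volume := (measurable_const.indicator hFm).aemeasurable
    obtain ⟨hae₀, hmeas₀, hnorm₀⟩ := hb₀ f₀ ⟨hf₀m, hFfin⟩
    -- upper bound for the pairing
    have hup : (∫⁻ x, ENNReal.ofReal |f₀ x| * avgSumE S g x)
        ≤ C₀ * X.enorm f₀ * dualENormN X.enorm g := by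
      calc (∫⁻ x, ENNReal.ofReal |f₀ x| * avgSumE S g x)
          = ∫⁻ x, ENNReal.ofReal |g x| * avgSumE S f₀ x := pairing_symm hc f₀ g hf₀m hg.1
        _ = ∫⁻ x, ENNReal.ofReal |(fun y => (avgSumE S f₀ y).toReal) x * g x| :=
            (lint_toReal_mul hae₀).symm
        _ ≤ X.enorm (fun y => (avgSumE S f₀ y).toReal) * dualENormN X.enorm g :=
            holder X g hmeas₀ (lt_of_le_of_lt hnorm₀
              (ENNReal.mul_lt_top hC₀.lt_top hFfin)).ne
        _ ≤ C₀ * X.enorm f₀ * dualENormN X.enorm g := mul_le_mul_left hnorm₀ _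
    -- lower bound: it is infinite
    have hlow : (∫⁻ x, ENNReal.ofReal |f₀ x| * avgSumE S g x) = ⊤ := by
      apply top_le_iff.mp
      calc (⊤:ℝ≥0∞) = ⊤ * volume F := (ENNReal.top_mul hFpos.ne').symm
        _ = ∫⁻ x in F, (⊤:ℝ≥0∞) := (setLIntegral_const F ⊤).symm
        _ ≤ ∫⁻ x in F, avgSumE S g x := by
            apply setLIntegral_mono' hFm
            intro x hx
            rw [hFT hx]
        _ = ∫⁻ x, F.indicator (fun _ => (1:ℝ≥0∞)) x * avgSumE S g x :=
            (lint_ind_mul hFm _).symm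
        _ = ∫⁻ x, ENNReal.ofReal |f₀ x| * avgSumE S g x := by
            apply lintegral_congr
            intro x
            rw [hf₀, ofReal_abs_ind]
    rw [hlow] at hup
    have : C₀ * X.enorm f₀ * dualENormN X.enorm g < ⊤ :=
      ENNReal.mul_lt_top (ENNReal.mul_lt_top hC₀.lt_top hFfin) hg.2
    exact absurd (top_le_iff.mp hup) this.ne

/-- Forward norm bound on the dual space. -/
theorem forward_norm (X : QBFS d) {S : Set (Cube d)} (hc : S.Countable)
    {C₀ C : ℝ≥0∞} (hC₀ : C₀ ≠ ⊤)
    (hb₀ : SparseBoundOneN X.enorm S C₀) (hb : SparseBoundOneN X.enorm S C)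
    {g : FnSp d} (hg : MemN (dualENormN X.enorm) g) :
    dualENormN X.enorm (fun x => (avgSumE S g x).toReal) ≤ C * dualENormN X.enorm g := by
  apply dual_le
  intro f hfm hf1
  have hfmem : MemN X.enorm f := ⟨hfm, by rw [hf1]; exact ENNReal.one_lt_top⟩
  obtain ⟨hae₀, hmeas₀, hnorm₀⟩ := hb₀ f hfmem
  obtain ⟨_, _, hnorm⟩ := hb f hfmem
  calc (∫⁻ x, ENNReal.ofReal |f x * (fun y => (avgSumE S g y).toReal) x|)
      ≤ ∫⁻ x, ENNReal.ofReal |f x| * avgSumE S g x := by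
        apply lintegral_mono
        intro x
        show ENNReal.ofReal |f x * (avgSumE S g x).toReal| ≤ _
        rw [mul_comm]
        exact ofReal_toReal_mul_le (avgSumE S g) f x
    _ = ∫⁻ x, ENNReal.ofReal |g x| * avgSumE S f x := pairing_symm hc f g hfm hg.1
    _ = ∫⁻ x, ENNReal.ofReal |(fun y => (avgSumE S f y).toReal) x * g x| :=
        (lint_toReal_mul hae₀).symm
    _ ≤ X.enorm (fun y => (avgSumE S f y).toReal) * dualENormN X.enorm g :=
        holder X g hmeas₀ (lt_of_le_of_lt hnorm₀
          (ENNReal.mul_lt_top hC₀.lt_top hfmem.2)).ne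
    _ ≤ (C * X.enorm f) * dualENormN X.enorm g := mul_le_mul_left hnorm _
    _ = C * dualENormN X.enorm g := by rw [hf1, mul_one]

/-- Backward norm bound. -/
theorem backward_norm (X : QBFS d) (hBa : IsBanachFS X) (hFa : HasFatou X)
    {S : Set (Cube d)} (hc : S.Countable) {C : ℝ≥0∞}
    (hb' : SparseBoundOneN (dualENormN X.enorm) S C)
    {f : FnSp d} (hf : MemN X.enorm f)
    (hfin : ∀ᵐ x ∂volume, avgSumE S f x ≠ ⊤) :
    X.enorm (fun x => (avgSumE S f x).toReal) ≤ C * X.enorm f := by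
  have hmeas : AEMeasurable (fun x => (avgSumE S f x).toReal) volume :=
    (ENNReal.measurable_toReal.comp (avgSumE_meas hc f)).aemeasurable
  apply le_trans (LL X hBa hFa _ hmeas)
  apply dual_le
  intro g hgm hg1
  have hgmem : MemN (dualENormN X.enorm) g := ⟨hgm, by rw [hg1]; exact ENNReal.one_lt_top⟩
  obtain ⟨hae', hmeas', hnorm'⟩ := hb' g hgmem
  calc (∫⁻ x, ENNReal.ofReal |g x * (fun y => (avgSumE S f y).toReal) x|)
      = ∫⁻ x, ENNReal.ofReal |(fun y => (avgSumE S f y).toReal) x * g x| := by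
        apply lintegral_congr
        intro x
        rw [mul_comm]
    _ = ∫⁻ x, ENNReal.ofReal |g x| * avgSumE S f x := lint_toReal_mul hfin
    _ = ∫⁻ x, ENNReal.ofReal |f x| * avgSumE S g x := pairing_symm hc g f hgm hf.1
    _ = ∫⁻ x, ENNReal.ofReal |(fun y => (avgSumE S g y).toReal) x * f x| :=
        (lint_toReal_mul hae').symm
    _ = ∫⁻ x, ENNReal.ofReal |f x * (fun y => (avgSumE S g y).toReal) x| :=
        lintegral_congr fun x => by rw [mul_comm]
    _ ≤ X.enorm f * dualENormN X.enorm (fun y => (avgSumE S g y).toReal) :=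
        holder X _ hf.1 hf.2.ne
    _ ≤ X.enorm f * (C * dualENormN X.enorm g) := mul_le_mul_right hnorm' _
    _ = C * X.enorm f := by rw [hg1, mul_one, mul_comm]

/-- Backward a.e. finiteness. -/
theorem backward_aefin (X : QBFS d) {S : Set (Cube d)} (hc : S.Countable)
    {C : ℝ≥0∞} (hC : C ≠ ⊤)
    (hb' : SparseBoundOneN (dualENormN X.enorm) S C)
    (hfinQ' : ∀ Q ∈ S, dualENormN X.enorm (cubeInd Q) < ⊤)
    {f : FnSp d} (hf : MemN X.enorm f) :
    ∀ᵐ x ∂volume, avgSumE S f x ≠ ⊤ := by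
  set T : Set (Fin d → ℝ) := {x | avgSumE S f x = ⊤} with hT
  have hTm : MeasurableSet T := (avgSumE_meas hc f) (measurableSet_singleton ⊤)
  by_cases hTvol : volume T = 0
  · rw [MeasureTheory.ae_iff]
    convert hTvol using 2
    ext x
    simp [hT]
  · exfalso
    have hTpos : 0 < volume T := pos_iff_ne_zero.mpr hTvol
    -- T is contained in the union of the cubes
    haveI := hc.to_subtype
    have hTsub : T ⊆ ⋃ Q : S, Q.1.set := by
      intro x hx
      by_contra hnot
      simp only [Set.mem_iUnion, not_exists] at hnot
      have hzero : avgSumE S f x = 0 := by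
        rw [avgSumE]
        exact ENNReal.tsum_eq_zero.mpr fun Q => Set.indicator_of_notMem (hnot Q) _
      rw [hT, Set.mem_setOf_eq, hzero] at hx
      simp at hx
    have hsome : ∃ Q₀ : S, 0 < volume (T ∩ Q₀.1.set) := by
      by_contra hcon
      push_neg at hcon
      simp only [le_zero_iff] at hcon
      have : volume T = 0 := by
        have h1 : T = ⋃ Q : S, (T ∩ Q.1.set) := by
          apply Set.eq_of_subset_of_subset
          · intro x hx
            obtain ⟨U, ⟨Q, rfl⟩, hU⟩ := hTsub hx
            exact Set.mem_iUnion.mpr ⟨Q, ⟨hx, hU⟩⟩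
          · exact Set.iUnion_subset fun Q => Set.inter_subset_left
        rw [h1]
        exact measure_iUnion_null hcon
      exact hTvol this
    obtain ⟨Q₀, hQ₀pos⟩ := hsome
    obtain ⟨F, hFT, hFm, hFpos, hFfin⟩ := X.saturation _ (hTm.inter (cube_meas Q₀.1)) hQ₀pos
    set g₀ : FnSp d := F.indicator fun _ => (1:ℝ) with hg₀
    have hg₀m : AEMeasurable g₀ volume := (measurable_const.indicator hFm).aemeasurable
    have hg₀fin : dualENormN X.enorm g₀ < ⊤ := by
      apply lt_of_le_of_lt _ (hfinQ' Q₀.1 Q₀.2)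
      apply dual_mono
      apply Filter.Eventually.of_forall
      intro x
      by_cases hx : x ∈ F
      · rw [hg₀, Set.indicator_of_mem hx]
        have hxQ : x ∈ Q₀.1.set := (hFT hx).2
        rw [cubeInd, Set.indicator_of_mem hxQ]
      · rw [hg₀, Set.indicator_of_notMem hx, abs_zero]
        exact abs_nonneg _
    have hg₀mem : MemN (dualENormN X.enorm) g₀ := ⟨hg₀m, hg₀fin⟩
    obtain ⟨hae', hmeas', hnorm'⟩ := hb' g₀ hg₀mem
    have hup : (∫⁻ x, ENNReal.ofReal |g₀ x| * avgSumE S f x)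
        ≤ X.enorm f * (C * dualENormN X.enorm g₀) := by
      calc (∫⁻ x, ENNReal.ofReal |g₀ x| * avgSumE S f x)
          = ∫⁻ x, ENNReal.ofReal |f x| * avgSumE S g₀ x := pairing_symm hc g₀ f hg₀m hf.1
        _ = ∫⁻ x, ENNReal.ofReal |(fun y => (avgSumE S g₀ y).toReal) x * f x| :=
            (lint_toReal_mul hae').symm
        _ = ∫⁻ x, ENNReal.ofReal |f x * (fun y => (avgSumE S g₀ y).toReal) x| :=
            lintegral_congr fun x => by rw [mul_comm]
        _ ≤ X.enorm f * dualENormN X.enorm (fun y => (avgSumE S g₀ y).toReal) :=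
            holder X _ hf.1 hf.2.ne
        _ ≤ X.enorm f * (C * dualENormN X.enorm g₀) := mul_le_mul_right hnorm' _
    have hlow : (∫⁻ x, ENNReal.ofReal |g₀ x| * avgSumE S f x) = ⊤ := by
      apply top_le_iff.mp
      calc (⊤:ℝ≥0∞) = ⊤ * volume F := (ENNReal.top_mul hFpos.ne').symm
        _ = ∫⁻ x in F, (⊤:ℝ≥0∞) := (setLIntegral_const F ⊤).symm
        _ ≤ ∫⁻ x in F, avgSumE S f x := by
            apply setLIntegral_mono' hFm
            intro x hx
            rw [(hFT hx).1]
        _ = ∫⁻ x, F.indicator (fun _ => (1:ℝ≥0∞)) x * avgSumE S f x :=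
            (lint_ind_mul hFm _).symm
        _ = ∫⁻ x, ENNReal.ofReal |g₀ x| * avgSumE S f x := by
            apply lintegral_congr
            intro x
            rw [hg₀, ofReal_abs_ind]
    rw [hlow] at hup
    have : X.enorm f * (C * dualENormN X.enorm g₀) < ⊤ :=
      ENNReal.mul_lt_top hf.2 (ENNReal.mul_lt_top hC.lt_top hg₀fin)
    exact absurd (top_le_iff.mp hup) this.ne

end LLaux
namespace LLaux

variable {d : ℕ}

theorem dualSat_of_cubes (X : QBFS d)
    (hQ : ∀ Q : Cube d, dualENormN X.enorm (cubeInd Q) < ⊤) : DualSaturated X := by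
  intro E hE hpos
  set Qn : ℕ → Cube d := fun n => ⟨fun _ => -(n+1:ℝ), 2*(n+1), by positivity⟩ with hQn
  have hcover : ∀ x : Fin d → ℝ, ∃ n : ℕ, x ∈ (Qn n).set := by
    intro x
    obtain ⟨n₀, hn₀⟩ := exists_nat_ge ‖x‖
    refine ⟨n₀, ?_⟩
    have hxi : ∀ i, |x i| ≤ (n₀:ℝ) := by
      intro i
      calc |x i| = ‖x i‖ := (Real.norm_eq_abs _).symm
        _ ≤ ‖x‖ := norm_le_pi_norm x i
        _ ≤ (n₀:ℝ) := hn₀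
    simp only [hQn, Cube.set, Set.mem_Icc, Pi.le_def]
    constructor
    · intro i
      have := (abs_le.mp (hxi i)).1
      linarith
    · intro i
      have := (abs_le.mp (hxi i)).2
      linarith
  have hEeq : E = ⋃ n, (E ∩ (Qn n).set) := by
    apply Set.eq_of_subset_of_subset
    · intro x hx
      obtain ⟨n, hn⟩ := hcover x
      exact Set.mem_iUnion.mpr ⟨n, hx, hn⟩
    · exact Set.iUnion_subset fun n => Set.inter_subset_left
  have hex : ∃ n, 0 < volume (E ∩ (Qn n).set) := by
    by_contra hcon
    push_neg at hcon
    simp only [le_zero_iff] at hcon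
    rw [hEeq, measure_iUnion_null hcon] at hpos
    exact absurd rfl hpos.ne'
  obtain ⟨n, hn⟩ := hex
  refine ⟨E ∩ (Qn n).set, Set.inter_subset_left, hE.inter (cube_meas _), hn, ?_⟩
  apply lt_of_le_of_lt _ (hQ (Qn n))
  apply dual_mono
  apply Filter.Eventually.of_forall
  intro x
  by_cases hx : x ∈ E ∩ (Qn n).set
  · rw [Set.indicator_of_mem hx, cubeInd, Set.indicator_of_mem hx.2]
  · rw [Set.indicator_of_notMem hx, abs_zero]
    exact abs_nonneg _

theorem muckA_forward (X : QBFS d) (hA : MuckAN X.enorm) :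
    DualSaturated X ∧ MuckAN (dualENormN X.enorm) ∧
      muckAConstN (dualENormN X.enorm) ≤ muckAConstN X.enorm := by
  obtain ⟨hAQ, hAc⟩ := hA
  have hDS : DualSaturated X := dualSat_of_cubes X (fun Q => (hAQ Q).2)
  have hdd : ∀ Q : Cube d,
      dualENormN (dualENormN X.enorm) (cubeInd Q) ≤ X.enorm (cubeInd Q) :=
    fun Q => dual_dual_le X (cubeInd_meas Q).aemeasurable (hAQ Q).1.ne
  have hle : muckAConstN (dualENormN X.enorm) ≤ muckAConstN X.enorm := by
    apply iSup_le
    intro Q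
    calc dualENormN X.enorm (cubeInd Q) * dualENormN (dualENormN X.enorm) (cubeInd Q)
          / volume Q.set
        ≤ X.enorm (cubeInd Q) * dualENormN X.enorm (cubeInd Q) / volume Q.set := by
          rw [mul_comm (X.enorm (cubeInd Q))]
          exact ENNReal.div_le_div_right (mul_le_mul_right (hdd Q) _) _
      _ ≤ muckAConstN X.enorm := le_iSup
          (fun Q => X.enorm (cubeInd Q) * dualENormN X.enorm (cubeInd Q) / volume Q.set) Q
  exact ⟨hDS, ⟨fun Q => ⟨(hAQ Q).2, lt_of_le_of_lt (hdd Q) (hAQ Q).1⟩,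
    lt_of_le_of_lt hle hAc⟩, hle⟩

theorem muckA_le_dual (X : QBFS d) (hB : IsBanachFS X) (hF : HasFatou X) :
    muckAConstN X.enorm ≤ muckAConstN (dualENormN X.enorm) := by
  apply iSup_le
  intro Q
  calc X.enorm (cubeInd Q) * dualENormN X.enorm (cubeInd Q) / volume Q.set
      ≤ dualENormN X.enorm (cubeInd Q) * dualENormN (dualENormN X.enorm) (cubeInd Q)
        / volume Q.set := by
        rw [mul_comm (dualENormN X.enorm (cubeInd Q))]
        exact ENNReal.div_le_div_right
          (mul_le_mul_left (LL X hB hF _ (cubeInd_meas Q).aemeasurable) _) _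
    _ ≤ muckAConstN (dualENormN X.enorm) := le_iSup
        (fun Q => dualENormN X.enorm (cubeInd Q)
          * dualENormN (dualENormN X.enorm) (cubeInd Q) / volume Q.set) Q

theorem muckA_backward (X : QBFS d) (hB : IsBanachFS X) (hF : HasFatou X)
    (hA' : MuckAN (dualENormN X.enorm)) : MuckAN X.enorm := by
  obtain ⟨hAQ', hAc'⟩ := hA'
  exact ⟨fun Q => ⟨lt_of_le_of_lt (LL X hB hF _ (cubeInd_meas Q).aemeasurable) (hAQ' Q).2,
    (hAQ' Q).1⟩, lt_of_le_of_lt (muckA_le_dual X hB hF) hAc'⟩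

theorem disjoint_countable {P : Set (Cube d)} (hP : PairwiseDisjointCubes P) : P.Countable :=
  countable_of_disjoint (fun Q _ => cube_meas Q) (fun Q _ => vol_cube_pos Q) hP

theorem sparse_countable {S : Set (Cube d)} (hS : IsSparse (1/2) S) : S.Countable := by
  obtain ⟨E, hE, hdisj⟩ := hS
  apply countable_of_disjoint (fun Q hQ => (hE Q hQ).1) _ hdisj
  intro Q hQ
  apply lt_of_lt_of_le _ (hE Q hQ).2.2
  exact ENNReal.mul_pos (ENNReal.ofReal_pos.mpr (by norm_num)).ne' (vol_cube_pos Q).ne'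

theorem toReal_avgSum_meas {S : Set (Cube d)} (hc : S.Countable) (f : FnSp d) :
    AEMeasurable (fun x => (avgSumE S f x).toReal) volume :=
  (ENNReal.measurable_toReal.comp (avgSumE_meas hc f)).aemeasurable

/-! Strong statements -/

theorem strong_transfer (X : QBFS d) {C₀ C : ℝ≥0∞} (hC₀ : C₀ < ⊤)
    (hSB₀ : StrongBoundN X.enorm C₀) (hSB : StrongBoundN X.enorm C) :
    StrongBoundN (dualENormN X.enorm) C := by
  intro P hP g hg
  have hcP : P.Countable := disjoint_countable hP
  exact ⟨forward_aefin X hcP hC₀.ne (hSB₀ P hP) hg, toReal_avgSum_meas hcP g,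
    forward_norm X hcP hC₀.ne (hSB₀ P hP) (hSB P hP) hg⟩

theorem strong_backward_any (X : QBFS d) (hB : IsBanachFS X) (hF : HasFatou X)
    {C : ℝ≥0∞} (hSB' : StrongBoundN (dualENormN X.enorm) C)
    {P : Set (Cube d)} (hP : PairwiseDisjointCubes P) {f : FnSp d} (hf : MemN X.enorm f)
    (haef : ∀ᵐ x ∂volume, avgSumE P f x ≠ ⊤) :
    (∀ᵐ x ∂volume, avgSumE P f x ≠ ⊤) ∧
    AEMeasurable (fun x => (avgSumE P f x).toReal) volume ∧
    X.enorm (fun x => (avgSumE P f x).toReal) ≤ C * X.enorm f := by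
  have hcP : P.Countable := disjoint_countable hP
  exact ⟨haef, toReal_avgSum_meas hcP f,
    backward_norm X hB hF hcP (hSB' P hP) hf haef⟩

theorem strong_backward (X : QBFS d) (hB : IsBanachFS X) (hF : HasFatou X)
    {C : ℝ≥0∞} (hC : C < ⊤) (hSB' : StrongBoundN (dualENormN X.enorm) C) :
    StrongBoundN X.enorm C := by
  have hsing' : ∀ Q : Cube d, SparseBoundOneN (dualENormN X.enorm) {Q} C :=
    fun Q => hSB' {Q} (Set.pairwise_singleton _ _)
  have hfinQ' : ∀ Q : Cube d, dualENormN X.enorm (cubeInd Q) < ⊤ :=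
    cube_dual_facts X hC.ne hsing' (fun Q => exists_dual_mem X hB hF Q)
  intro P hP f hf
  have haef : ∀ᵐ x ∂volume, avgSumE P f x ≠ ⊤ := by
    apply Filter.Eventually.of_forall
    apply avgSumE_disj_ne_top hP
    intro Q hQ
    exact (avg_lt_top Q (lint_cube_le X Q hf.1 hf.2.ne)
      (ENNReal.mul_ne_top hf.2.ne (hfinQ' Q).ne)).ne
  exact strong_backward_any X hB hF hSB' hP hf haef

/-! Sparse statements -/

theorem sparse_transfer (X : QBFS d) {C₀ C : ℝ≥0∞} (hC₀ : C₀ < ⊤)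
    (hSB₀ : SparseBoundN X.enorm C₀) (hSB : SparseBoundN X.enorm C) :
    SparseBoundN (dualENormN X.enorm) C := by
  intro S hS g hg
  have hcS : S.Countable := sparse_countable hS
  exact ⟨forward_aefin X hcS hC₀.ne (hSB₀ S hS) hg, toReal_avgSum_meas hcS g,
    forward_norm X hcS hC₀.ne (hSB₀ S hS) (hSB S hS) hg⟩

theorem sparse_backward (X : QBFS d) (hB : IsBanachFS X) (hF : HasFatou X)
    {C : ℝ≥0∞} (hC : C < ⊤) (hSB' : SparseBoundN (dualENormN X.enorm) C) :
    SparseBoundN X.enorm C := by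
  have hsing' : ∀ Q : Cube d, SparseBoundOneN (dualENormN X.enorm) {Q} C :=
    fun Q => hSB' {Q} (singleton_sparse Q)
  have hfinQ' : ∀ Q : Cube d, dualENormN X.enorm (cubeInd Q) < ⊤ :=
    cube_dual_facts X hC.ne hsing' (fun Q => exists_dual_mem X hB hF Q)
  intro S hS f hf
  have hcS : S.Countable := sparse_countable hS
  have haef : ∀ᵐ x ∂volume, avgSumE S f x ≠ ⊤ :=
    backward_aefin X hcS hC.ne (hSB' S hS) (fun Q _ => hfinQ' Q) hf
  exact ⟨haef, toReal_avgSum_meas hcS f,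
    backward_norm X hB hF hcS (hSB' S hS) hf haef⟩

end LLaux
/-- duality of the conditions `A`, `A_strong`, `A_sparse`. -/
theorem statement3 {d : ℕ} (X : QBFS d) :
    (MuckAN X.enorm →
      DualSaturated X ∧ MuckAN (dualENormN X.enorm) ∧
        muckAConstN (dualENormN X.enorm) ≤ muckAConstN X.enorm) ∧
    (IsBanachFS X → HasFatou X →
      (MuckAN X.enorm ↔ MuckAN (dualENormN X.enorm)) ∧
      (MuckAN X.enorm → muckAConstN (dualENormN X.enorm) = muckAConstN X.enorm)) ∧
    ((∃ C, C < ⊤ ∧ StrongBoundN X.enorm C) →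
      DualSaturated X ∧ (∃ C, C < ⊤ ∧ StrongBoundN (dualENormN X.enorm) C) ∧
        sInf {C | StrongBoundN (dualENormN X.enorm) C} ≤ sInf {C | StrongBoundN X.enorm C}) ∧
    (IsBanachFS X → HasFatou X →
      ((∃ C, C < ⊤ ∧ StrongBoundN X.enorm C) ↔
        (∃ C, C < ⊤ ∧ StrongBoundN (dualENormN X.enorm) C)) ∧
      ((∃ C, C < ⊤ ∧ StrongBoundN X.enorm C) →
        sInf {C | StrongBoundN (dualENormN X.enorm) C} = sInf {C | StrongBoundN X.enorm C})) ∧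
    ((∃ C, C < ⊤ ∧ SparseBoundN X.enorm C) →
      DualSaturated X ∧ (∃ C, C < ⊤ ∧ SparseBoundN (dualENormN X.enorm) C) ∧
        sInf {C | SparseBoundN (dualENormN X.enorm) C} ≤ sInf {C | SparseBoundN X.enorm C}) ∧
    (IsBanachFS X → HasFatou X →
      ((∃ C, C < ⊤ ∧ SparseBoundN X.enorm C) ↔
        (∃ C, C < ⊤ ∧ SparseBoundN (dualENormN X.enorm) C)) ∧
      ((∃ C, C < ⊤ ∧ SparseBoundN X.enorm C) →
        sInf {C | SparseBoundN (dualENormN X.enorm) C} = sInf {C | SparseBoundN X.enorm C})) := by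
  refine ⟨?_, ?_, ?_, ?_, ?_, ?_⟩
  · exact fun hA => LLaux.muckA_forward X hA
  · intro hB hF
    refine ⟨⟨fun hA => (LLaux.muckA_forward X hA).2.1,
      fun hA' => LLaux.muckA_backward X hB hF hA'⟩, ?_⟩
    intro hA
    exact le_antisymm (LLaux.muckA_forward X hA).2.2 (LLaux.muckA_le_dual X hB hF)
  · rintro ⟨C₀, hC₀, hSB₀⟩
    have hsing : ∀ Q : Cube d, SparseBoundOneN X.enorm {Q} C₀ :=
      fun Q => hSB₀ {Q} (Set.pairwise_singleton _ _)
    have hcf := LLaux.cube_facts X hC₀.ne hsing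
    refine ⟨LLaux.dualSat_of_cubes X (fun Q => (hcf Q).2),
      ⟨C₀, hC₀, LLaux.strong_transfer X hC₀ hSB₀ hSB₀⟩, ?_⟩
    apply sInf_le_sInf
    intro C hC
    exact LLaux.strong_transfer X hC₀ hSB₀ hC
  · intro hB hF
    constructor
    · constructor
      · rintro ⟨C₀, hC₀, hSB₀⟩
        exact ⟨C₀, hC₀, LLaux.strong_transfer X hC₀ hSB₀ hSB₀⟩
      · rintro ⟨C, hC, hSB'⟩
        exact ⟨C, hC, LLaux.strong_backward X hB hF hC hSB'⟩
    · rintro ⟨C₀, hC₀, hSB₀⟩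
      apply le_antisymm
      · apply sInf_le_sInf
        intro C hC
        exact LLaux.strong_transfer X hC₀ hSB₀ hC
      · apply sInf_le_sInf
        intro C hC'
        intro P hP f hf
        obtain ⟨haef, hmeas, _⟩ := hSB₀ P hP f hf
        exact ⟨haef, hmeas, LLaux.backward_norm X hB hF (LLaux.disjoint_countable hP)
          (hC' P hP) hf haef⟩
  · rintro ⟨C₀, hC₀, hSB₀⟩
    have hsing : ∀ Q : Cube d, SparseBoundOneN X.enorm {Q} C₀ :=
      fun Q => hSB₀ {Q} (LLaux.singleton_sparse Q)
    have hcf := LLaux.cube_facts X hC₀.ne hsing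
    refine ⟨LLaux.dualSat_of_cubes X (fun Q => (hcf Q).2),
      ⟨C₀, hC₀, LLaux.sparse_transfer X hC₀ hSB₀ hSB₀⟩, ?_⟩
    apply sInf_le_sInf
    intro C hC
    exact LLaux.sparse_transfer X hC₀ hSB₀ hC
  · intro hB hF
    constructor
    · constructor
      · rintro ⟨C₀, hC₀, hSB₀⟩
        exact ⟨C₀, hC₀, LLaux.sparse_transfer X hC₀ hSB₀ hSB₀⟩
      · rintro ⟨C, hC, hSB'⟩
        exact ⟨C, hC, LLaux.sparse_backward X hB hF hC hSB'⟩
    · rintro ⟨C₀, hC₀, hSB₀⟩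
      apply le_antisymm
      · apply sInf_le_sInf
        intro C hC
        exact LLaux.sparse_transfer X hC₀ hSB₀ hC
      · apply sInf_le_sInf
        intro C hC'
        intro S hS f hf
        obtain ⟨haef, hmeas, _⟩ := hSB₀ S hS f hf
        exact ⟨haef, hmeas, LLaux.backward_norm X hB hF (LLaux.sparse_countable hS)
          (hC' S hS) hf haef⟩
end
end
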